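/- arXiv:2304.14744 — 3 statements merged into one kernel-verified Lean document; each statement's English description precedes it below -/
import Mathlib

section
/- There exists a constant C > 0 (depending only on N) such that for all z₁, z₂ ∈ ℂ: (i) |F(z₁+z₂) − F(z₁) − Re(conj(f(z₁))·z₂)| ≤ C·(|z₁|^{8/(N−4)}·|z₂|² + |z₂|^{2N/(N−4)}); and (ii) |F(z₁+z₂) − F(z₁) − Re(conj(f(z₁))·z₂) − (1/2)·Re(conj(f'(z₁)z₂)·z₂)| ≤ C·|z₂|^{2N/(N−4)}. -/
open MeasureTheory

noncomputable section

abbrev Rn (N : ℕ) : Type := EuclideanSpace ℝ (Fin N)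

noncomputable def lapR {N : ℕ} (u : Rn N → ℝ) (x : Rn N) : ℝ :=
  ∑ i : Fin N, iteratedFDeriv ℝ 2 u x (fun _ => EuclideanSpace.single i 1)

noncomputable def lapC {N : ℕ} (u : Rn N → ℂ) (x : Rn N) : ℂ :=
  ∑ i : Fin N, iteratedFDeriv ℝ 2 u x (fun _ => EuclideanSpace.single i 1)

noncomputable def Wfun (N : ℕ) (x : Rn N) : ℝ :=
  ((N : ℝ) * ((N : ℝ) - 4) * ((N : ℝ) ^ 2 - 4)) ^ (((N : ℝ) - 4) / 8) *
    (1 + ‖x‖ ^ 2) ^ (-(((N : ℝ) - 4) / 2))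

noncomputable def LamR {N : ℕ} (v : Rn N → ℝ) (x : Rn N) : ℝ :=
  (((N : ℝ) - 4) / 2) * v x + fderiv ℝ v x x

noncomputable def LamC {N : ℕ} (v : Rn N → ℂ) (x : Rn N) : ℂ :=
  ((((N : ℝ) - 4) / 2) : ℝ) * v x + fderiv ℝ v x x

noncomputable def rescR {N : ℕ} (lam : ℝ) (u : Rn N → ℝ) (x : Rn N) : ℝ :=
  lam ^ (-(((N : ℝ) - 4) / 2)) * u (lam⁻¹ • x)

noncomputable def fNL (N : ℕ) (z : ℂ) : ℂ :=
  Complex.ofReal (‖z‖ ^ ((8 : ℝ) / ((N : ℝ) - 4))) * z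

noncomputable def fNL' (N : ℕ) (z w : ℂ) : ℂ :=
  if z = 0 then 0 else
    Complex.ofReal (‖z‖ ^ ((8 : ℝ) / ((N : ℝ) - 4))) *
      (w + Complex.ofReal (((8 : ℝ) / ((N : ℝ) - 4)) * ((((starRingEnd ℂ) z) * w).re / ‖z‖ ^ 2)) * z)

noncomputable def FNL (N : ℕ) (z : ℂ) : ℝ :=
  (((N : ℝ) - 4) / (2 * (N : ℝ))) * ‖z‖ ^ ((2 * (N : ℝ)) / ((N : ℝ) - 4))

noncomputable def cexp (θ : ℝ) : ℂ := Complex.exp (Complex.I * θ)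

noncomputable def pairC {N : ℕ} (v w : Rn N → ℂ) : ℝ :=
  ∫ x : Rn N, ((starRingEnd ℂ) (v x) * w x).re

noncomputable def energyC {N : ℕ} (u : Rn N → ℂ) : ℝ :=
  (1 / 2) * (∫ x : Rn N, ‖lapC u x‖ ^ 2) - (∫ x : Rn N, FNL N (u x))

noncomputable def enorm2 {N : ℕ} (g : Rn N → ℂ) : ℝ := ∫ x : Rn N, ‖lapC g x‖ ^ 2

namespace S3
open scoped NNReal

lemma rpow_add_le_add_rpow' {a b α : ℝ} (ha : 0 ≤ a) (hb : 0 ≤ b) (h0 : 0 ≤ α) (h1 : α ≤ 1) :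
    (a + b) ^ α ≤ a ^ α + b ^ α := by
  have h := NNReal.rpow_add_le_add_rpow a.toNNReal b.toNNReal h0 h1
  have hc : ((a.toNNReal + b.toNNReal : ℝ≥0) : ℝ) = a + b := by
    simp [Real.coe_toNNReal _ ha, Real.coe_toNNReal _ hb]
  calc (a + b) ^ α = (((a.toNNReal + b.toNNReal) : ℝ≥0) : ℝ) ^ α := by rw [hc]
    _ = (((a.toNNReal + b.toNNReal) ^ α : ℝ≥0) : ℝ) := by rw [← NNReal.coe_rpow]
    _ ≤ ((a.toNNReal ^ α + b.toNNReal ^ α : ℝ≥0) : ℝ) := by exact_mod_cast h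
    _ = a ^ α + b ^ α := by
        rw [NNReal.coe_add, NNReal.coe_rpow, NNReal.coe_rpow, Real.coe_toNNReal _ ha, Real.coe_toNNReal _ hb]

lemma abs_rpow_sub_rpow {a b α : ℝ} (ha : 0 ≤ a) (hb : 0 ≤ b) (h0 : 0 < α) (h1 : α ≤ 1) :
    |a ^ α - b ^ α| ≤ |a - b| ^ α := by
  have key : ∀ x y : ℝ, 0 ≤ x → 0 ≤ y → y ≤ x → x ^ α - y ^ α ≤ (x - y) ^ α := by
    intro x y hx hy hyx
    have : x ^ α ≤ y ^ α + (x - y) ^ α := by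
      calc x ^ α = (y + (x - y)) ^ α := by ring_nf
        _ ≤ y ^ α + (x - y) ^ α := rpow_add_le_add_rpow' hy (by linarith) h0.le h1
    linarith
  rcases le_total b a with h | h
  · rw [abs_of_nonneg (by linarith [Real.rpow_le_rpow hb h h0.le] : (0:ℝ) ≤ a ^ α - b ^ α),
      abs_of_nonneg (by linarith : (0:ℝ) ≤ a - b)]
    exact key a b ha hb h
  · rw [abs_sub_comm, abs_sub_comm a b,
      abs_of_nonneg (by linarith [Real.rpow_le_rpow ha h h0.le] : (0:ℝ) ≤ b ^ α - a ^ α),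
      abs_of_nonneg (by linarith : (0:ℝ) ≤ b - a)]
    exact key b a hb ha h

lemma rpow_sub_two_mul_sq {r α : ℝ} (hr : 0 ≤ r) (h0 : 0 < α) (h1 : α ≤ 1) :
    r ^ (α - 2) * r ^ (2:ℕ) = r ^ α := by
  rcases hr.eq_or_lt with h | h
  · rw [← h]
    rw [Real.zero_rpow (by linarith : α - 2 ≠ 0), Real.zero_rpow h0.ne']
    norm_num
  · rw [← Real.rpow_natCast r 2, ← Real.rpow_add h]
    norm_num


open scoped NNReal

lemma key2 {a b d α : ℝ} (h0 : 0 < α) (h1 : α ≤ 1) (hb : 0 < b) (hba : b ≤ a)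
    (hd : 0 ≤ d) (hab : a - b ≤ d) :
    (b ^ (α-2) - a ^ (α-2)) * b ^ 2 ≤ 2 * (a ^ (α-1) * d) := by
  have ha : 0 < a := lt_of_lt_of_le hb hba
  set A2 := a ^ (2-α) with hA2def
  set B2 := b ^ (2-α) with hB2def
  have hA2 : 0 < A2 := Real.rpow_pos_of_pos ha _
  have hB2 : 0 < B2 := Real.rpow_pos_of_pos hb _
  have e1 : A2 * a ^ (α-2) = 1 := by rw [hA2def, ← Real.rpow_add ha]; norm_num
  have q1 : A2 * a ^ α = a ^ 2 := by
    rw [hA2def, ← Real.rpow_add ha, show (2:ℝ)-α+α = ((2:ℕ):ℝ) by push_cast; ring,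
      Real.rpow_natCast]
  have q2 : B2 * b ^ α = b ^ 2 := by
    rw [hB2def, ← Real.rpow_add hb, show (2:ℝ)-α+α = ((2:ℕ):ℝ) by push_cast; ring,
      Real.rpow_natCast]
  have q3 : b ^ α ≤ a ^ α := Real.rpow_le_rpow hb.le hba h0.le
  have e5 : b ^ (α-2) * b ^ 2 = b ^ α := rpow_sub_two_mul_sq hb.le h0 h1
  have e6 : a * a ^ (α-2) = a ^ (α-1) := by
    have h := Real.rpow_add ha 1 (α-2)
    rw [Real.rpow_one] at h
    rw [← h, show (1:ℝ)+(α-2) = α-1 by ring]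
  have step1 : (A2 - B2) * a ^ α ≤ 2 * (a * d) := by
    have hb2 : b ^ 2 ≤ B2 * a ^ α := by nlinarith [mul_le_mul_of_nonneg_left q3 hB2.le]
    have q4 : a ^ 2 - b ^ 2 ≤ 2 * (a * d) := by nlinarith
    nlinarith [q1]
  have hrw : (b ^ (α-2) - a ^ (α-2)) * b ^ 2 = (A2 - B2) * (a ^ (α-2) * b ^ α) := by
    linear_combination e5 + a ^ (α-2) * q2 - b ^ α * e1
  have haα : 0 < a ^ α := Real.rpow_pos_of_pos ha _
  have hpos : (0:ℝ) ≤ a ^ (α-2) * b ^ α := by positivity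
  have m1 : ((A2 - B2) * a ^ α) * (a ^ (α-2) * b ^ α) ≤ (2*(a*d)) * (a ^ (α-2) * b ^ α) :=
    mul_le_mul_of_nonneg_right step1 hpos
  have m2 : 2*(a*d) * (a ^ (α-2) * b ^ α) ≤ 2*(a ^ (α-1) * d) * a ^ α := by
    have h7 : a * a ^ (α-2) * b ^ α ≤ a ^ (α-1) * a ^ α := by
      calc a * a ^ (α-2) * b ^ α = a ^ (α-1) * b ^ α := by rw [e6]
        _ ≤ a ^ (α-1) * a ^ α := mul_le_mul_of_nonneg_left q3 (Real.rpow_nonneg ha.le _)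
    nlinarith [mul_le_mul_of_nonneg_left h7 (by positivity : (0:ℝ) ≤ 2*d)]
  have final : (A2 - B2) * (a ^ (α-2) * b ^ α) ≤ 2 * (a ^ (α-1) * d) := by
    have := le_of_mul_le_mul_right
      (by nlinarith [m1, m2] : ((A2 - B2) * (a ^ (α-2) * b ^ α)) * a ^ α ≤ (2*(a ^ (α-1)*d)) * a ^ α) haα
    exact this
  linarith [hrw ▸ final]

lemma gg_norm {α : ℝ} (h0 : 0 < α) (h1 : α ≤ 1) (z : ℂ) :
    ‖((‖z‖ ^ (α-2) : ℝ) : ℂ) * z ^ 2‖ = ‖z‖ ^ α := by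
  rw [norm_mul, Complex.norm_real, norm_pow, Real.norm_eq_abs,
    abs_of_nonneg (Real.rpow_nonneg (norm_nonneg z) _)]
  exact rpow_sub_two_mul_sq (norm_nonneg z) h0 h1

lemma gg_holder_aux {α : ℝ} (h0 : 0 < α) (h1 : α ≤ 1) (x y : ℂ) (hyx : ‖y‖ ≤ ‖x‖) :
    ‖((‖x‖ ^ (α-2) : ℝ) : ℂ) * x ^ 2 - ((‖y‖ ^ (α-2) : ℝ) : ℂ) * y ^ 2‖ ≤ 4 * ‖x - y‖ ^ α := by
  by_cases hxy : x = y
  · simp [hxy, Real.zero_rpow h0.ne']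
  have hd : 0 < ‖x - y‖ := by rwa [norm_pos_iff, sub_ne_zero]
  set d := ‖x - y‖ with hddef
  rcases le_or_gt (‖x‖/2) d with hfar | hnear
  · -- far case
    have hb1 : ‖x‖ ^ α ≤ 2 * d ^ α := by
      calc ‖x‖ ^ α ≤ (2*d) ^ α := Real.rpow_le_rpow (norm_nonneg x) (by linarith) h0.le
        _ = 2 ^ α * d ^ α := Real.mul_rpow (by norm_num) hd.le
        _ ≤ 2 * d ^ α := by
            have : (2:ℝ) ^ α ≤ 2 ^ (1:ℝ) := Real.rpow_le_rpow_of_exponent_le one_le_two h1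
            rw [Real.rpow_one] at this
            nlinarith [Real.rpow_nonneg hd.le α]
    have hb2 : ‖y‖ ^ α ≤ ‖x‖ ^ α := Real.rpow_le_rpow (norm_nonneg y) hyx h0.le
    calc ‖((‖x‖ ^ (α-2) : ℝ) : ℂ) * x ^ 2 - ((‖y‖ ^ (α-2) : ℝ) : ℂ) * y ^ 2‖
        ≤ ‖((‖x‖ ^ (α-2) : ℝ) : ℂ) * x ^ 2‖ + ‖((‖y‖ ^ (α-2) : ℝ) : ℂ) * y ^ 2‖ := norm_sub_le _ _
      _ = ‖x‖ ^ α + ‖y‖ ^ α := by rw [gg_norm h0 h1, gg_norm h0 h1]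
      _ ≤ 4 * d ^ α := by linarith
  · -- near case
    have hx : 0 < ‖x‖ := by linarith
    have hyb : ‖x‖ - d ≤ ‖y‖ := by
      have := norm_sub_norm_le x y
      rw [← hddef] at this; linarith
    have hy : 0 < ‖y‖ := by linarith
    set a := ‖x‖
    set b := ‖y‖
    have hdec : ((b ^ (α-2) : ℝ) : ℂ) * y ^ 2 - ((a ^ (α-2) : ℝ) : ℂ) * x ^ 2
        = -(((a ^ (α-2) : ℝ) : ℂ) * (x ^ 2 - y ^ 2)) - ((((a ^ (α-2) : ℝ) : ℂ) - ((b ^ (α-2) : ℝ) : ℂ)) * y ^ 2) := by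
      ring
    have T1 : ‖((a ^ (α-2) : ℝ) : ℂ) * (x ^ 2 - y ^ 2)‖ ≤ 2 * (a ^ (α-1) * d) := by
      have h2 : ‖x ^ 2 - y ^ 2‖ ≤ 2 * a * d := by
        calc ‖x ^ 2 - y ^ 2‖ = ‖(x + y) * (x - y)‖ := by ring_nf
          _ = ‖x + y‖ * d := by rw [norm_mul]
          _ ≤ (a + b) * d := by
              have := norm_add_le x y
              nlinarith
          _ ≤ 2 * a * d := by nlinarith
      calc ‖((a ^ (α-2) : ℝ) : ℂ) * (x ^ 2 - y ^ 2)‖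
          = a ^ (α-2) * ‖x ^ 2 - y ^ 2‖ := by
            rw [norm_mul, Complex.norm_real, Real.norm_eq_abs,
              abs_of_nonneg (Real.rpow_nonneg (norm_nonneg x) _)]
        _ ≤ a ^ (α-2) * (2 * a * d) := by
            exact mul_le_mul_of_nonneg_left h2 (Real.rpow_nonneg (norm_nonneg x) _)
        _ = 2 * (a ^ (α-1) * d) := by
            have e6 : a * a ^ (α-2) = a ^ (α-1) := by
              have h := Real.rpow_add hx 1 (α-2)
              rw [Real.rpow_one] at h
              rw [← h, show (1:ℝ)+(α-2) = α-1 by ring]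
            nlinarith [e6]
    have T2 : ‖((((a ^ (α-2) : ℝ) : ℂ) - ((b ^ (α-2) : ℝ) : ℂ)) * y ^ 2)‖ ≤ 2 * (a ^ (α-1) * d) := by
      have hmono : a ^ (α-2) ≤ b ^ (α-2) :=
        Real.rpow_le_rpow_of_nonpos hy hyx (by linarith)
      calc ‖((((a ^ (α-2) : ℝ) : ℂ) - ((b ^ (α-2) : ℝ) : ℂ)) * y ^ 2)‖
          = |a ^ (α-2) - b ^ (α-2)| * b ^ 2 := by
            rw [norm_mul, norm_pow, ← Complex.ofReal_sub, Complex.norm_real, Real.norm_eq_abs]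
        _ = (b ^ (α-2) - a ^ (α-2)) * b ^ 2 := by rw [abs_of_nonpos (by linarith)]; ring
        _ ≤ 2 * (a ^ (α-1) * d) := key2 h0 h1 hy hyx hd.le (by linarith)
    have hcomb : ‖((a ^ (α-2) : ℝ) : ℂ) * x ^ 2 - ((b ^ (α-2) : ℝ) : ℂ) * y ^ 2‖
        ≤ 4 * (a ^ (α-1) * d) := by
      calc ‖((a ^ (α-2) : ℝ) : ℂ) * x ^ 2 - ((b ^ (α-2) : ℝ) : ℂ) * y ^ 2‖
          ≤ ‖((a ^ (α-2) : ℝ) : ℂ) * (x ^ 2 - y ^ 2)‖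
            + ‖((((a ^ (α-2) : ℝ) : ℂ) - ((b ^ (α-2) : ℝ) : ℂ)) * y ^ 2)‖ := by
            have : ((a ^ (α-2) : ℝ) : ℂ) * x ^ 2 - ((b ^ (α-2) : ℝ) : ℂ) * y ^ 2
                = ((a ^ (α-2) : ℝ) : ℂ) * (x ^ 2 - y ^ 2)
                  + ((((a ^ (α-2) : ℝ) : ℂ) - ((b ^ (α-2) : ℝ) : ℂ)) * y ^ 2) := by ring
            rw [this]
            exact norm_add_le _ _
        _ ≤ 4 * (a ^ (α-1) * d) := by linarith
    have hfin : a ^ (α-1) * d ≤ d ^ α := by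
      have hda : d ≤ a := by linarith
      have : a ^ (α-1) ≤ d ^ (α-1) := Real.rpow_le_rpow_of_nonpos hd hda (by linarith)
      have hdd : d ^ (α-1) * d = d ^ α := by
        have h := Real.rpow_add hd (α-1) 1
        rw [Real.rpow_one] at h
        rw [← h, show α-1+1 = α by ring]
      nlinarith [this, hd.le]
    calc ‖((a ^ (α-2) : ℝ) : ℂ) * x ^ 2 - ((b ^ (α-2) : ℝ) : ℂ) * y ^ 2‖
        ≤ 4 * (a ^ (α-1) * d) := hcomb
      _ ≤ 4 * d ^ α := by linarith

noncomputable def Lm (α : ℝ) (z : ℂ) : ℂ →L[ℝ] ℂ :=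
  (‖z‖ ^ α) • ContinuousLinearMap.id ℝ ℂ + ((α * ‖z‖ ^ (α-2)) • (innerSL ℝ z)).smulRight z

lemma Lm_apply (α : ℝ) (z w : ℂ) :
    Lm α z w = (‖z‖ ^ α) • w + ((α * ‖z‖ ^ (α-2)) * ((starRingEnd ℂ) z * w).re) • z := by
  simp only [Lm, ContinuousLinearMap.add_apply, ContinuousLinearMap.smul_apply,
    ContinuousLinearMap.id_apply, ContinuousLinearMap.smulRight_apply]
  rw [innerSL_apply_apply, Complex.inner, smul_eq_mul, mul_comm w]

lemma Lm_zero {α : ℝ} (h0 : 0 < α) : Lm α 0 = 0 := by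
  ext w
  simp [Lm, Real.zero_rpow h0.ne']

lemma norm_rpow_hasFDerivAt {β : ℝ} {z : ℂ} (hz : z ≠ 0) :
    HasFDerivAt (fun x : ℂ => ‖x‖ ^ β) ((β * ‖z‖ ^ (β-2)) • (innerSL ℝ z)) z := by
  have hzpos : (0:ℝ) < ‖z‖ := norm_pos_iff.2 hz
  have hz2 : (0:ℝ) < ‖z‖ ^ 2 := by positivity
  have h1 : HasFDerivAt (fun x : ℂ => ‖x‖ ^ 2) (2 • (innerSL ℝ z)) z :=
    (hasStrictFDerivAt_norm_sq z).hasFDerivAt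
  have h2 : HasDerivAt (fun t : ℝ => t ^ (β/2)) ((β/2) * (‖z‖^2 : ℝ) ^ (β/2 - 1)) (‖z‖^2 : ℝ) :=
    Real.hasDerivAt_rpow_const (Or.inl hz2.ne')
  have h3 := h2.comp_hasFDerivAt z h1
  simp only [Function.comp_def] at h3
  have hfun : (fun x : ℂ => ((‖x‖^2 : ℝ)) ^ (β/2)) = fun x : ℂ => ‖x‖ ^ β := by
    funext x
    rw [← Real.rpow_natCast ‖x‖ 2, ← Real.rpow_mul (norm_nonneg x)]
    congr 1
    push_cast
    ring
  rw [hfun] at h3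
  have hCLM : ((β/2) * (‖z‖^2 : ℝ) ^ (β/2 - 1)) • (2 • (innerSL ℝ z))
      = (β * ‖z‖ ^ (β-2)) • (innerSL ℝ z) := by
    have hsq : ((‖z‖^2 : ℝ)) ^ (β/2 - 1) = ‖z‖ ^ (β-2) := by
      rw [← Real.rpow_natCast ‖z‖ 2, ← Real.rpow_mul (norm_nonneg z)]
      congr 1
      push_cast
      ring
    ext w
    simp only [ContinuousLinearMap.smul_apply]
    rw [hsq]
    simp only [smul_eq_mul]
    ring
  rw [hCLM] at h3
  exact h3

lemma littleO_helper {γ : ℝ} (hγ : 0 < γ) {E : Type*} [NormedAddCommGroup E]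
    {f : ℂ → E} (hf : ∀ h : ℂ, ‖f h‖ ≤ ‖h‖ ^ γ * ‖h‖) :
    f =o[nhds (0:ℂ)] fun h => h := by
  rw [Asymptotics.isLittleO_iff]
  intro c hc
  have ht : Filter.Tendsto (fun h : ℂ => ‖h‖ ^ γ) (nhds 0) (nhds 0) := by
    have h1 : Filter.Tendsto (fun h : ℂ => ‖h‖) (nhds 0) (nhds 0) := by
      simpa using (continuous_norm (E := ℂ)).tendsto 0
    have h2 := (Real.continuousAt_rpow_const 0 γ (Or.inr hγ.le)).tendsto.comp h1
    simpa [Function.comp_def, Real.zero_rpow hγ.ne'] using h2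
  filter_upwards [ht.eventually_lt_const hc] with h hh
  calc ‖f h‖ ≤ ‖h‖ ^ γ * ‖h‖ := hf h
    _ ≤ c * ‖h‖ := by
        have := norm_nonneg h
        nlinarith [Real.rpow_nonneg (norm_nonneg h) γ]

lemma f_hasFDerivAt {α : ℝ} (h0 : 0 < α) (z : ℂ) :
    HasFDerivAt (fun x : ℂ => (((‖x‖ ^ α : ℝ)) : ℂ) * x) (Lm α z) z := by
  rcases eq_or_ne z 0 with rfl | hz
  · rw [Lm_zero h0, hasFDerivAt_iff_isLittleO_nhds_zero]
    simp only [zero_add, norm_zero, Real.zero_rpow h0.ne', Complex.ofReal_zero, zero_mul,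
      sub_zero, ContinuousLinearMap.zero_apply]
    refine littleO_helper h0 (fun h => ?_)
    rw [norm_mul, Complex.norm_real, Real.norm_eq_abs,
      abs_of_nonneg (Real.rpow_nonneg (norm_nonneg h) _)]
  · have h1 := (norm_rpow_hasFDerivAt (β := α) hz).smul (hasFDerivAt_id z)
    simp only [id] at h1
    have hfun : (fun x : ℂ => (‖x‖ ^ α) • x) = fun x : ℂ => (((‖x‖ ^ α : ℝ)) : ℂ) * x := by
      funext x
      rw [Complex.real_smul]
    rw [show (fun x : ℂ => (((‖x‖ ^ α : ℝ)) : ℂ) * x) = (fun x : ℂ => ‖x‖ ^ α) • id from hfun.symm]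
    exact h1

lemma gg_holder {α : ℝ} (h0 : 0 < α) (h1 : α ≤ 1) (x y : ℂ) :
    ‖((‖x‖ ^ (α-2) : ℝ) : ℂ) * x ^ 2 - ((‖y‖ ^ (α-2) : ℝ) : ℂ) * y ^ 2‖ ≤ 4 * ‖x - y‖ ^ α := by
  rcases le_total ‖y‖ ‖x‖ with h | h
  · exact gg_holder_aux h0 h1 x y h
  · rw [norm_sub_rev, norm_sub_rev x y]
    exact gg_holder_aux h0 h1 y x h

lemma Lm_eq {α : ℝ} (h0 : 0 < α) (h1 : α ≤ 1) (z w : ℂ) :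
    Lm α z w = (((1 + α/2) * ‖z‖ ^ α : ℝ) : ℂ) * w
      + ((α/2 : ℝ) : ℂ) * (((‖z‖ ^ (α-2) : ℝ) : ℂ) * z ^ 2 * (starRingEnd ℂ) w) := by
  have key : ((‖z‖ ^ (α-2) : ℝ) : ℂ) * (z * (starRingEnd ℂ) z) = ((‖z‖ ^ α : ℝ) : ℂ) := by
    rw [Complex.mul_conj, ← Complex.ofReal_mul]
    congr 1
    rw [Complex.normSq_eq_norm_sq]
    exact rpow_sub_two_mul_sq (norm_nonneg z) h0 h1
  have hu : ((((starRingEnd ℂ) z * w).re : ℝ) : ℂ)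
      = ((starRingEnd ℂ) z * w + z * (starRingEnd ℂ) w) / 2 := by
    have h2 := Complex.add_conj ((starRingEnd ℂ) z * w)
    have h3 : (starRingEnd ℂ) ((starRingEnd ℂ) z * w) = z * (starRingEnd ℂ) w := by
      rw [map_mul, Complex.conj_conj]
    rw [h3] at h2
    rw [h2]
    push_cast
    ring
  rw [Lm_apply, Complex.real_smul, Complex.real_smul]
  push_cast
  rw [hu]
  linear_combination ((α : ℂ)/2 * w) * key

lemma Lm_bound {α : ℝ} (h0 : 0 < α) (h1 : α ≤ 1) (z w : ℂ) :
    ‖Lm α z w‖ ≤ 2 * (‖z‖ ^ α * ‖w‖) := by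
  rw [Lm_eq h0 h1]
  have hX : (0:ℝ) ≤ ‖z‖ ^ α := Real.rpow_nonneg (norm_nonneg z) _
  calc ‖(((1 + α/2) * ‖z‖ ^ α : ℝ) : ℂ) * w
      + ((α/2 : ℝ) : ℂ) * (((‖z‖ ^ (α-2) : ℝ) : ℂ) * z ^ 2 * (starRingEnd ℂ) w)‖
      ≤ ‖(((1 + α/2) * ‖z‖ ^ α : ℝ) : ℂ) * w‖
        + ‖((α/2 : ℝ) : ℂ) * (((‖z‖ ^ (α-2) : ℝ) : ℂ) * z ^ 2 * (starRingEnd ℂ) w)‖ :=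
        norm_add_le _ _
    _ ≤ (1 + α/2) * ‖z‖ ^ α * ‖w‖ + (α/2) * (‖z‖ ^ α * ‖w‖) := by
        have b1 : ‖(((1 + α/2) * ‖z‖ ^ α : ℝ) : ℂ) * w‖ = (1 + α/2) * ‖z‖ ^ α * ‖w‖ := by
          rw [norm_mul, Complex.norm_real, Real.norm_eq_abs,
            abs_of_nonneg (by positivity : (0:ℝ) ≤ (1 + α/2) * ‖z‖ ^ α)]
        have b2 : ‖((α/2 : ℝ) : ℂ) * (((‖z‖ ^ (α-2) : ℝ) : ℂ) * z ^ 2 * (starRingEnd ℂ) w)‖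
            = (α/2) * (‖z‖ ^ α * ‖w‖) := by
          rw [norm_mul, norm_mul, Complex.norm_real, Real.norm_eq_abs,
            abs_of_nonneg (by positivity : (0:ℝ) ≤ α/2), gg_norm h0 h1, RCLike.norm_conj]
        rw [b1, b2]
    _ ≤ 2 * (‖z‖ ^ α * ‖w‖) := by nlinarith [norm_nonneg w, mul_nonneg hX (norm_nonneg w)]

lemma Lm_holder {α : ℝ} (h0 : 0 < α) (h1 : α ≤ 1) (x y : ℂ) :
    ‖Lm α x - Lm α y‖ ≤ 4 * ‖x - y‖ ^ α := by
  refine ContinuousLinearMap.opNorm_le_bound _ (by positivity) (fun w => ?_)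
  rw [ContinuousLinearMap.sub_apply, Lm_eq h0 h1, Lm_eq h0 h1]
  have hdec : (((1 + α/2) * ‖x‖ ^ α : ℝ) : ℂ) * w
      + ((α/2 : ℝ) : ℂ) * (((‖x‖ ^ (α-2) : ℝ) : ℂ) * x ^ 2 * (starRingEnd ℂ) w)
      - ((((1 + α/2) * ‖y‖ ^ α : ℝ) : ℂ) * w
      + ((α/2 : ℝ) : ℂ) * (((‖y‖ ^ (α-2) : ℝ) : ℂ) * y ^ 2 * (starRingEnd ℂ) w))
      = (((1 + α/2) : ℝ) : ℂ) * ((((‖x‖ ^ α : ℝ) : ℂ)) - (((‖y‖ ^ α : ℝ) : ℂ))) * w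
      + ((α/2 : ℝ) : ℂ) * ((((‖x‖ ^ (α-2) : ℝ) : ℂ) * x ^ 2
          - ((‖y‖ ^ (α-2) : ℝ) : ℂ) * y ^ 2) * (starRingEnd ℂ) w) := by
    push_cast
    ring
  rw [hdec]
  have hr1 : |‖x‖ ^ α - ‖y‖ ^ α| ≤ ‖x - y‖ ^ α := by
    refine le_trans (abs_rpow_sub_rpow (norm_nonneg x) (norm_nonneg y) h0 h1) ?_
    exact Real.rpow_le_rpow (abs_nonneg _) (abs_norm_sub_norm_le x y) h0.le
  have hr2 := gg_holder h0 h1 x y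
  calc ‖(((1 + α/2) : ℝ) : ℂ) * ((((‖x‖ ^ α : ℝ) : ℂ)) - (((‖y‖ ^ α : ℝ) : ℂ))) * w
      + ((α/2 : ℝ) : ℂ) * ((((‖x‖ ^ (α-2) : ℝ) : ℂ) * x ^ 2
          - ((‖y‖ ^ (α-2) : ℝ) : ℂ) * y ^ 2) * (starRingEnd ℂ) w)‖
      ≤ (1 + α/2) * (‖x - y‖ ^ α) * ‖w‖ + (α/2) * (4 * ‖x - y‖ ^ α * ‖w‖) := by
        refine le_trans (norm_add_le _ _) ?_
        have b1 : ‖(((1 + α/2) : ℝ) : ℂ) * ((((‖x‖ ^ α : ℝ) : ℂ)) - (((‖y‖ ^ α : ℝ) : ℂ))) * w‖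
            = (1 + α/2) * |‖x‖ ^ α - ‖y‖ ^ α| * ‖w‖ := by
          rw [norm_mul, norm_mul, Complex.norm_real, Real.norm_eq_abs,
            abs_of_nonneg (by positivity : (0:ℝ) ≤ 1 + α/2), ← Complex.ofReal_sub,
            Complex.norm_real, Real.norm_eq_abs]
        have b2 : ‖((α/2 : ℝ) : ℂ) * ((((‖x‖ ^ (α-2) : ℝ) : ℂ) * x ^ 2
            - ((‖y‖ ^ (α-2) : ℝ) : ℂ) * y ^ 2) * (starRingEnd ℂ) w)‖
            = (α/2) * (‖(((‖x‖ ^ (α-2) : ℝ) : ℂ) * x ^ 2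
            - ((‖y‖ ^ (α-2) : ℝ) : ℂ) * y ^ 2)‖ * ‖w‖) := by
          rw [norm_mul, norm_mul, Complex.norm_real, Real.norm_eq_abs,
            abs_of_nonneg (by positivity : (0:ℝ) ≤ α/2), RCLike.norm_conj]
        rw [b1, b2]
        have hw : (0:ℝ) ≤ ‖w‖ := norm_nonneg w
        have m1 : (1 + α/2) * |‖x‖ ^ α - ‖y‖ ^ α| * ‖w‖
            ≤ (1 + α/2) * (‖x - y‖ ^ α) * ‖w‖ :=
          mul_le_mul_of_nonneg_right
            (mul_le_mul_of_nonneg_left hr1 (by positivity)) hw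
        have m2 : (α/2) * (‖(((‖x‖ ^ (α-2) : ℝ) : ℂ) * x ^ 2
            - ((‖y‖ ^ (α-2) : ℝ) : ℂ) * y ^ 2)‖ * ‖w‖)
            ≤ (α/2) * (4 * ‖x - y‖ ^ α * ‖w‖) :=
          mul_le_mul_of_nonneg_left
            (mul_le_mul_of_nonneg_right hr2 hw) (by positivity)
        linarith
    _ ≤ 4 * ‖x - y‖ ^ α * ‖w‖ := by
        nlinarith [Real.rpow_nonneg (norm_nonneg (x - y)) α, norm_nonneg w,
          mul_nonneg (Real.rpow_nonneg (norm_nonneg (x - y)) α) (norm_nonneg w)]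

lemma taylor_f {α : ℝ} (h0 : 0 < α) (h1 : α ≤ 1) (a w : ℂ) :
    ‖(((‖a + w‖ ^ α : ℝ)) : ℂ) * (a + w) - (((‖a‖ ^ α : ℝ)) : ℂ) * a - Lm α a w‖
      ≤ 4 * ‖w‖ ^ α * ‖w‖ := by
  set s := Metric.closedBall a ‖w‖ with hs
  set g := fun x : ℂ => (((‖x‖ ^ α : ℝ)) : ℂ) * x - Lm α a x with hgdef
  have hg : ∀ x ∈ s, HasFDerivWithinAt g (Lm α x - Lm α a) s x := fun x _ =>
    ((f_hasFDerivAt h0 x).sub ((Lm α a).hasFDerivAt)).hasFDerivWithinAt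
  have hbound : ∀ x ∈ s, ‖Lm α x - Lm α a‖ ≤ 4 * ‖w‖ ^ α := by
    intro x hx
    refine le_trans (Lm_holder h0 h1 x a) ?_
    have hxa : ‖x - a‖ ≤ ‖w‖ := by rwa [Metric.mem_closedBall, dist_eq_norm] at hx
    have := Real.rpow_le_rpow (norm_nonneg (x - a)) hxa h0.le
    linarith
  have hmem1 : a ∈ s := Metric.mem_closedBall_self (norm_nonneg w)
  have hmem2 : a + w ∈ s := by
    simp [hs, Metric.mem_closedBall, dist_eq_norm]
  have key := Convex.norm_image_sub_le_of_norm_hasFDerivWithin_le hg hbound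
    (convex_closedBall a ‖w‖) hmem1 hmem2
  simp only [hgdef] at key
  have hsimp : ((((‖a + w‖ ^ α : ℝ)) : ℂ) * (a + w) - Lm α a (a + w))
      - ((((‖a‖ ^ α : ℝ)) : ℂ) * a - Lm α a a)
      = (((‖a + w‖ ^ α : ℝ)) : ℂ) * (a + w) - (((‖a‖ ^ α : ℝ)) : ℂ) * a - Lm α a w := by
    rw [map_add]
    ring
  rw [hsimp, add_sub_cancel_left] at key
  exact key

lemma rpow_add_one' {r γ : ℝ} (hr : 0 ≤ r) (hγ : γ ≠ 0) (hγ1 : γ + 1 ≠ 0) :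
    r ^ (γ + 1) = r ^ γ * r := by
  rcases hr.eq_or_lt with h | h
  · rw [← h, Real.zero_rpow hγ, Real.zero_rpow hγ1, zero_mul]
  · rw [Real.rpow_add h, Real.rpow_one]

lemma rpow_add_two' {r γ : ℝ} (hr : 0 ≤ r) (hγ : γ ≠ 0) (hγ2 : γ + 2 ≠ 0) :
    r ^ (γ + 2) = r ^ γ * r ^ 2 := by
  rcases hr.eq_or_lt with h | h
  · rw [← h, Real.zero_rpow hγ, Real.zero_rpow hγ2, zero_mul]
  · rw [Real.rpow_add h, ← Real.rpow_natCast r 2]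
    norm_num


lemma hN4 {N : ℕ} (hN : 13 ≤ N) : (9:ℝ) ≤ (N:ℝ) - 4 := by
  have : (13:ℝ) ≤ (N:ℝ) := by exact_mod_cast hN
  linarith

lemma fNL'_eq {N : ℕ} (hN : 13 ≤ N) (z w : ℂ) :
    fNL' N z w = Lm ((8:ℝ)/((N:ℝ)-4)) z w := by
  have h9 := hN4 hN
  set α := (8:ℝ)/((N:ℝ)-4) with hα
  have h0 : 0 < α := by rw [hα]; positivity
  have h1 : α ≤ 1 := by rw [hα, div_le_one (by linarith)]; linarith
  rcases eq_or_ne z 0 with rfl | hz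
  · rw [Lm_zero h0]
    simp [fNL']
  · have hz2 : (0:ℝ) < ‖z‖ ^ 2 := by
      have : (0:ℝ) < ‖z‖ := norm_pos_iff.2 hz
      positivity
    have e : ‖z‖ ^ (α-2) * ‖z‖ ^ 2 = ‖z‖ ^ α := rpow_sub_two_mul_sq (norm_nonneg z) h0 h1
    have hpow : ‖z‖ ^ α / ‖z‖ ^ 2 = ‖z‖ ^ (α-2) := by
      rw [← e]
      exact mul_div_cancel_right₀ _ hz2.ne'
    have hco : (‖z‖ ^ α) * (α * (((starRingEnd ℂ) z * w).re / ‖z‖ ^ 2))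
        = α * ‖z‖ ^ (α-2) * ((starRingEnd ℂ) z * w).re := by
      calc (‖z‖ ^ α) * (α * (((starRingEnd ℂ) z * w).re / ‖z‖ ^ 2))
          = α * ((starRingEnd ℂ) z * w).re * (‖z‖ ^ α / ‖z‖ ^ 2) := by ring
        _ = α * ‖z‖ ^ (α-2) * ((starRingEnd ℂ) z * w).re := by rw [hpow]; ring
    rw [fNL', if_neg hz, Lm_apply, Complex.real_smul, Complex.real_smul]
    calc ((‖z‖ ^ α : ℝ) : ℂ) * (w + ((α * (((starRingEnd ℂ) z * w).re / ‖z‖ ^ 2) : ℝ) : ℂ) * z)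
        = ((‖z‖ ^ α : ℝ) : ℂ) * w + (((‖z‖ ^ α) * (α * (((starRingEnd ℂ) z * w).re / ‖z‖ ^ 2)) : ℝ) : ℂ) * z := by
          push_cast
          ring
      _ = ((‖z‖ ^ α : ℝ) : ℂ) * w + ((α * ‖z‖ ^ (α-2) * ((starRingEnd ℂ) z * w).re : ℝ) : ℂ) * z := by
          rw [hco]

lemma FNL_hasFDerivAt {N : ℕ} (hN : 13 ≤ N) (z : ℂ) :
    HasFDerivAt (FNL N) ((‖z‖ ^ ((8:ℝ)/((N:ℝ)-4))) • (innerSL ℝ z)) z := by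
  have h9 := hN4 hN
  have hNpos : (0:ℝ) < (N:ℝ) := by linarith
  set A := (8:ℝ)/((N:ℝ)-4) with hA
  set P := (2*(N:ℝ))/((N:ℝ)-4) with hP
  have hA0 : 0 < A := by rw [hA]; positivity
  have hPA : P = A + 2 := by
    rw [hP, hA]
    field_simp
    ring
  have hc : ((N:ℝ)-4)/(2*(N:ℝ)) * P = 1 := by
    rw [hP]
    field_simp
  have hc0 : 0 < ((N:ℝ)-4)/(2*(N:ℝ)) := by positivity
  have hc1 : ((N:ℝ)-4)/(2*(N:ℝ)) ≤ 1 := by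
    rw [div_le_one (by linarith)]
    linarith
  have hfun : FNL N = fun x : ℂ => ((N:ℝ)-4)/(2*(N:ℝ)) * ‖x‖ ^ P := by
    funext x
    rw [FNL]
  rcases eq_or_ne z 0 with rfl | hz
  · rw [hasFDerivAt_iff_isLittleO_nhds_zero]
    have hFNL0 : FNL N 0 = 0 := by
      rw [hfun]
      simp [Real.zero_rpow (by positivity : P ≠ 0)]
    simp only [zero_add, hFNL0, sub_zero, norm_zero, Real.zero_rpow hA0.ne', zero_smul,
      ContinuousLinearMap.zero_apply]
    refine littleO_helper (by linarith : (0:ℝ) < A + 1) (fun h => ?_)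
    rw [hfun]
    have hsplit : ‖h‖ ^ P = ‖h‖ ^ (A+1) * ‖h‖ := by
      rw [hPA, show A + 2 = (A+1) + 1 by ring]
      exact rpow_add_one' (norm_nonneg h) (by linarith) (by linarith)
    rw [Real.norm_eq_abs, abs_of_nonneg (by positivity : (0:ℝ) ≤ ((N:ℝ)-4)/(2*(N:ℝ)) * ‖h‖ ^ P)]
    rw [hsplit]
    have h2 : (0:ℝ) ≤ ‖h‖ ^ (A+1) * ‖h‖ := by positivity
    nlinarith
  · have h1 := (norm_rpow_hasFDerivAt (β := P) hz).const_mul (((N:ℝ)-4)/(2*(N:ℝ)))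
    rw [hfun]
    have hCLM : (((N:ℝ)-4)/(2*(N:ℝ))) • ((P * ‖z‖ ^ (P-2)) • (innerSL ℝ z))
        = (‖z‖ ^ A) • (innerSL ℝ z) := by
      rw [smul_smul]
      congr 1
      rw [show P - 2 = A by linarith [hPA]]
      calc ((N:ℝ)-4)/(2*(N:ℝ)) * (P * ‖z‖ ^ A) = (((N:ℝ)-4)/(2*(N:ℝ)) * P) * ‖z‖ ^ A := by ring
        _ = ‖z‖ ^ A := by rw [hc, one_mul]
    rw [← hCLM]
    exact h1

end S3


set_option maxHeartbeats 1000000 in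
theorem stmt_3 (N : ℕ) (hN : 13 ≤ N) :
    ∃ C : ℝ, 0 < C ∧ ∀ z1 z2 : ℂ,
      |FNL N (z1 + z2) - FNL N z1 - ((starRingEnd ℂ) (fNL N z1) * z2).re|
        ≤ C * (‖z1‖ ^ ((8 : ℝ) / ((N : ℝ) - 4)) * ‖z2‖ ^ 2
            + ‖z2‖ ^ ((2 * (N : ℝ)) / ((N : ℝ) - 4))) ∧
      |FNL N (z1 + z2) - FNL N z1 - ((starRingEnd ℂ) (fNL N z1) * z2).re
          - (1 / 2) * ((starRingEnd ℂ) (fNL' N z1 z2) * z2).re|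
        ≤ C * ‖z2‖ ^ ((2 * (N : ℝ)) / ((N : ℝ) - 4)) := by
  refine ⟨8, by norm_num, fun z1 z2 => ?_⟩
  have h9 := S3.hN4 hN
  have hNpos : (0:ℝ) < (N:ℝ) := by linarith
  set A := (8:ℝ)/((N:ℝ)-4) with hA
  set P := (2*(N:ℝ))/((N:ℝ)-4) with hP
  have hA0 : 0 < A := by rw [hA]; positivity
  have hA1 : A ≤ 1 := by rw [hA, div_le_one (by linarith)]; linarith
  have hPA : P = A + 2 := by
    rw [hP, hA]
    field_simp
    ring
  have hfNL : fNL N = fun x : ℂ => (((‖x‖ ^ A : ℝ)) : ℂ) * x := rfl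
  -- derivative along the segment
  have hγ : ∀ t : ℝ, HasDerivAt (fun s : ℝ => z1 + s • z2) z2 t := by
    intro t
    have h := ((hasDerivAt_id t).smul_const z2).const_add z1
    simpa using h
  have hFd : ∀ t : ℝ, HasDerivAt (fun s : ℝ => FNL N (z1 + s • z2))
      (((starRingEnd ℂ) (fNL N (z1 + t • z2)) * z2).re) t := by
    intro t
    have h1 := (S3.FNL_hasFDerivAt hN (z1 + t • z2)).comp_hasDerivAt t (hγ t)
    simp only [Function.comp_def] at h1
    have hval : ((‖z1 + t • z2‖ ^ A) • (innerSL ℝ (z1 + t • z2))) z2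
        = ((starRingEnd ℂ) (fNL N (z1 + t • z2)) * z2).re := by
      rw [ContinuousLinearMap.smul_apply, innerSL_apply_apply, Complex.inner, smul_eq_mul, mul_comm z2, hfNL]
      simp only [map_mul, Complex.conj_ofReal, mul_assoc, Complex.re_ofReal_mul]
    rw [← hval]
    exact h1
  have hcontfNL : Continuous (fNL N) := by
    rw [hfNL]
    exact continuous_iff_continuousAt.2
      (fun z => (S3.f_hasFDerivAt hA0 z).differentiableAt.continuousAt)
  have hcontγ : Continuous (fun t : ℝ => z1 + t • z2) :=
    continuous_const.add (continuous_id.smul continuous_const)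
  have hφcont : Continuous (fun t : ℝ => ((starRingEnd ℂ) (fNL N (z1 + t • z2)) * z2).re) := by
    apply Complex.continuous_re.comp
    exact ((hcontfNL.comp hcontγ).star.mul continuous_const)
  have hFTC : ∫ t in (0:ℝ)..1, ((starRingEnd ℂ) (fNL N (z1 + t • z2)) * z2).re
      = FNL N (z1 + z2) - FNL N z1 := by
    have h := intervalIntegral.integral_eq_sub_of_hasDerivAt
      (f := fun s : ℝ => FNL N (z1 + s • z2))
      (fun t _ => hFd t) (hφcont.intervalIntegrable 0 1)
    simpa using h
  set R := ((starRingEnd ℂ) (fNL' N z1 z2) * z2).re with hR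
  set Φ0 := ((starRingEnd ℂ) (fNL N z1) * z2).re with hΦ0
  have hll : IntervalIntegrable (fun t : ℝ => t * R) MeasureTheory.volume 0 1 := by
    apply Continuous.intervalIntegrable
    exact continuous_id.mul continuous_const
  have hint2 : ∫ t in (0:ℝ)..1, (Φ0 + t * R) = Φ0 + R/2 := by
    rw [intervalIntegral.integral_add intervalIntegrable_const hll]
    rw [intervalIntegral.integral_const, intervalIntegral.integral_mul_const, integral_id]
    norm_num
    ring
  have hX : FNL N (z1 + z2) - FNL N z1 - Φ0 - (1/2) * R
      = ∫ t in (0:ℝ)..1,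
          (((starRingEnd ℂ) (fNL N (z1 + t • z2)) * z2).re - (Φ0 + t * R)) := by
    have hll2 : IntervalIntegrable (fun t : ℝ => Φ0 + t * R) MeasureTheory.volume 0 1 := by
      apply Continuous.intervalIntegrable
      exact continuous_const.add (continuous_id.mul continuous_const)
    rw [intervalIntegral.integral_sub (hφcont.intervalIntegrable 0 1) hll2, hFTC, hint2]
    ring
  have hbnd : ∀ t ∈ Set.uIoc (0:ℝ) 1,
      ‖(((starRingEnd ℂ) (fNL N (z1 + t • z2)) * z2).re - (Φ0 + t * R))‖
        ≤ 4 * ‖z2‖ ^ A * ‖z2‖ * ‖z2‖ := by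
    intro t ht
    rw [Set.uIoc_of_le (by norm_num : (0:ℝ) ≤ 1)] at ht
    obtain ⟨ht0, ht1⟩ := ht
    have hrw : ((starRingEnd ℂ) (fNL N (z1 + t • z2)) * z2).re - (Φ0 + t * R)
        = ((starRingEnd ℂ) (fNL N (z1 + t • z2) - fNL N z1 - S3.Lm A z1 (t • z2)) * z2).re := by
      rw [hΦ0, hR, S3.fNL'_eq hN, ← hA]
      have hLsm : S3.Lm A z1 (t • z2) = t • S3.Lm A z1 z2 := map_smul _ _ _
      rw [hLsm]
      simp only [map_sub, sub_mul, Complex.sub_re, Complex.real_smul, map_mul,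
        Complex.conj_ofReal, mul_assoc, Complex.re_ofReal_mul]
      ring
    rw [hrw]
    have h1 : |((starRingEnd ℂ) (fNL N (z1 + t • z2) - fNL N z1 - S3.Lm A z1 (t • z2)) * z2).re|
        ≤ ‖fNL N (z1 + t • z2) - fNL N z1 - S3.Lm A z1 (t • z2)‖ * ‖z2‖ := by
      refine le_trans (Complex.abs_re_le_norm _) ?_
      rw [norm_mul, RCLike.norm_conj]
    have hT : ‖fNL N (z1 + t • z2) - fNL N z1 - S3.Lm A z1 (t • z2)‖
        ≤ 4 * ‖t • z2‖ ^ A * ‖t • z2‖ := S3.taylor_f hA0 hA1 z1 (t • z2)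
    have h3 : ‖t • z2‖ ≤ ‖z2‖ := by
      rw [norm_smul, Real.norm_eq_abs, abs_of_pos ht0]
      nlinarith [norm_nonneg z2]
    have h4 : ‖t • z2‖ ^ A ≤ ‖z2‖ ^ A := Real.rpow_le_rpow (norm_nonneg _) h3 hA0.le
    have h5 : ‖fNL N (z1 + t • z2) - fNL N z1 - S3.Lm A z1 (t • z2)‖
        ≤ 4 * ‖z2‖ ^ A * ‖z2‖ := by
      refine le_trans hT ?_
      have := Real.rpow_nonneg (norm_nonneg (t • z2)) A
      have := Real.rpow_nonneg (norm_nonneg z2) A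
      nlinarith [norm_nonneg (t • z2), norm_nonneg z2]
    rw [Real.norm_eq_abs]
    calc |((starRingEnd ℂ) (fNL N (z1 + t • z2) - fNL N z1 - S3.Lm A z1 (t • z2)) * z2).re|
        ≤ ‖fNL N (z1 + t • z2) - fNL N z1 - S3.Lm A z1 (t • z2)‖ * ‖z2‖ := h1
      _ ≤ (4 * ‖z2‖ ^ A * ‖z2‖) * ‖z2‖ :=
          mul_le_mul_of_nonneg_right h5 (norm_nonneg z2)
      _ = 4 * ‖z2‖ ^ A * ‖z2‖ * ‖z2‖ := by ring
  have hii : |FNL N (z1 + z2) - FNL N z1 - Φ0 - (1/2) * R| ≤ 4 * ‖z2‖ ^ P := by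
    have h := intervalIntegral.norm_integral_le_of_norm_le_const hbnd
    rw [← hX] at h
    have hPz : ‖z2‖ ^ A * ‖z2‖ * ‖z2‖ = ‖z2‖ ^ P := by
      rw [hPA, S3.rpow_add_two' (norm_nonneg z2) hA0.ne' (by linarith)]
      ring
    rw [Real.norm_eq_abs] at h
    calc |FNL N (z1 + z2) - FNL N z1 - Φ0 - (1/2) * R|
        ≤ 4 * ‖z2‖ ^ A * ‖z2‖ * ‖z2‖ * |1 - 0| := h
      _ = 4 * ‖z2‖ ^ P := by
          rw [← hPz, show |(1:ℝ) - 0| = 1 by norm_num, mul_one]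
          ring
  have hRbnd : |R| ≤ 2 * (‖z1‖ ^ A * ‖z2‖) * ‖z2‖ := by
    rw [hR, S3.fNL'_eq hN, ← hA]
    calc |((starRingEnd ℂ) (S3.Lm A z1 z2) * z2).re|
        ≤ ‖S3.Lm A z1 z2‖ * ‖z2‖ := by
          refine le_trans (Complex.abs_re_le_norm _) ?_
          rw [norm_mul, RCLike.norm_conj]
      _ ≤ 2 * (‖z1‖ ^ A * ‖z2‖) * ‖z2‖ :=
          mul_le_mul_of_nonneg_right (S3.Lm_bound hA0 hA1 z1 z2) (norm_nonneg z2)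
  constructor
  · have : |FNL N (z1 + z2) - FNL N z1 - Φ0|
        ≤ |FNL N (z1 + z2) - FNL N z1 - Φ0 - (1/2) * R| + (1/2) * |R| := by
      have := abs_sub_abs_le_abs_sub (FNL N (z1 + z2) - FNL N z1 - Φ0)
        ((1/2) * R)
      have h2 : |(1/2) * R| = (1/2) * |R| := by rw [abs_mul]; norm_num
      calc |FNL N (z1 + z2) - FNL N z1 - Φ0|
          = |(FNL N (z1 + z2) - FNL N z1 - Φ0 - (1/2) * R) + (1/2) * R| := by ring_nf
        _ ≤ |FNL N (z1 + z2) - FNL N z1 - Φ0 - (1/2) * R| + |(1/2) * R| := abs_add_le _ _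
        _ = |FNL N (z1 + z2) - FNL N z1 - Φ0 - (1/2) * R| + (1/2) * |R| := by rw [h2]
    have hP0 : (0:ℝ) ≤ ‖z2‖ ^ P := Real.rpow_nonneg (norm_nonneg z2) P
    have hA0' : (0:ℝ) ≤ ‖z1‖ ^ A := Real.rpow_nonneg (norm_nonneg z1) A
    have hsq : ‖z2‖ ^ (2:ℕ) = ‖z2‖ * ‖z2‖ := sq ‖z2‖
    calc |FNL N (z1 + z2) - FNL N z1 - Φ0|
        ≤ |FNL N (z1 + z2) - FNL N z1 - Φ0 - (1/2) * R| + (1/2) * |R| := this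
      _ ≤ 4 * ‖z2‖ ^ P + (1/2) * (2 * (‖z1‖ ^ A * ‖z2‖) * ‖z2‖) := by
          have h3 : (0:ℝ) ≤ 1/2 := by norm_num
          nlinarith [hii, hRbnd]
      _ ≤ 8 * (‖z1‖ ^ A * ‖z2‖ ^ 2 + ‖z2‖ ^ P) := by
          rw [hsq]
          nlinarith [mul_nonneg hA0' (mul_nonneg (norm_nonneg z2) (norm_nonneg z2))]
  · calc |FNL N (z1 + z2) - FNL N z1 - Φ0 - 1/2 * R|
        ≤ 4 * ‖z2‖ ^ P := hii
      _ ≤ 8 * ‖z2‖ ^ P := by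
          nlinarith [Real.rpow_nonneg (norm_nonneg z2) P]
end
end

section
/- There exists a constant C > 0 such that for all ζ, θ ∈ ℝ, all μ ∈ [1/2, 2] and all λ ∈ (0, 1], one has |Re ∫_{ℝ^N} conj(e^{iζ}·ΛW_μ(x))·( f(e^{iζ}W_μ(x) + e^{iθ}W_λ(x)) − f(e^{iζ}W_μ(x)) − f(e^{iθ}W_λ(x)) ) dx| ≤ C·λ^{(N−4)/2}. -/
open MeasureTheory

noncomputable section

namespace Aux8

open MeasureTheory Real Set Metric Filter
open scoped ENNReal NNReal Topology

/-! ### Elementary real power inequalities -/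

lemma rpow_add_le_add_rpow' {a b q : ℝ} (ha : 0 ≤ a) (hb : 0 ≤ b) (hq0 : 0 ≤ q) (hq1 : q ≤ 1) :
    (a + b) ^ q ≤ a ^ q + b ^ q := by
  have h := NNReal.rpow_add_le_add_rpow a.toNNReal b.toNNReal hq0 hq1
  have h2 := NNReal.coe_le_coe.2 h
  push_cast at h2
  rwa [Real.coe_toNNReal _ ha, Real.coe_toNNReal _ hb] at h2

lemma abs_rpow_sub_rpow_le' {x y q : ℝ} (hx : 0 ≤ x) (hy : 0 ≤ y) (hq0 : 0 ≤ q) (hq1 : q ≤ 1) :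
    |x ^ q - y ^ q| ≤ |x - y| ^ q := by
  rcases le_total y x with h | h
  · rw [abs_of_nonneg (by rw [sub_nonneg]; exact Real.rpow_le_rpow hy h hq0),
      abs_of_nonneg (by linarith)]
    have : x ^ q ≤ (x - y) ^ q + y ^ q := by
      calc x ^ q = ((x - y) + y) ^ q := by ring_nf
      _ ≤ (x - y) ^ q + y ^ q := rpow_add_le_add_rpow' (by linarith) hy hq0 hq1
    linarith
  · rw [abs_of_nonpos (by rw [sub_nonpos]; exact Real.rpow_le_rpow hx h hq0),
      abs_of_nonpos (by linarith), neg_sub, neg_sub]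
    have : y ^ q ≤ (y - x) ^ q + x ^ q := by
      calc y ^ q = ((y - x) + x) ^ q := by ring_nf
      _ ≤ (y - x) ^ q + x ^ q := rpow_add_le_add_rpow' (by linarith) hx hq0 hq1
    linarith

lemma rpow_sub_rpow_le_mul' {x y q : ℝ} (hy : 0 < y) (hxy : y ≤ x) (hq0 : 0 ≤ q) (hq1 : q ≤ 1) :
    x ^ q - y ^ q ≤ q * y ^ (q - 1) * (x - y) := by
  have hx : 0 < x := lt_of_lt_of_le hy hxy
  have hs : -1 ≤ x / y - 1 := by
    have : 0 ≤ x / y := by positivity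
    linarith
  have hber := rpow_one_add_le_one_add_mul_self hs hq0 hq1
  have h1 : (1 : ℝ) + (x / y - 1) = x / y := by ring
  rw [h1] at hber
  have hyq : (0:ℝ) < y ^ q := Real.rpow_pos_of_pos hy q
  have hdiv : (x / y) ^ q = x ^ q / y ^ q := Real.div_rpow hx.le hy.le q
  rw [hdiv] at hber
  have := mul_le_mul_of_nonneg_right hber hyq.le
  rw [div_mul_cancel₀ _ hyq.ne'] at this
  calc x ^ q - y ^ q ≤ (1 + q * (x / y - 1)) * y ^ q - y ^ q := by linarith
    _ = q * (y ^ q / y) * (x - y) := by field_simp; ring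
    _ = q * y ^ (q - 1) * (x - y) := by rw [← Real.rpow_sub_one hy.ne']

lemma key_scalar {A B s q : ℝ} (hA : 0 ≤ A) (hB : 0 ≤ B) (hs : 0 ≤ s)
    (hsA : |s - A| ≤ B) (hq0 : 0 < q) (hq1 : q ≤ 1) :
    |s ^ q - A ^ q| * A ≤ 2 * (A ^ q * B) := by
  rcases eq_or_lt_of_le hA with rfl | hA0
  · simp only [mul_zero]
    positivity
  rcases le_total A (2 * B) with hc | hc
  · have h1 : |s ^ q - A ^ q| ≤ B ^ q := by
      calc |s ^ q - A ^ q| ≤ |s - A| ^ q := abs_rpow_sub_rpow_le' hs hA hq0.le hq1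
        _ ≤ B ^ q := Real.rpow_le_rpow (abs_nonneg _) hsA hq0.le
    rcases le_total B A with hBA | hAB
    · calc |s ^ q - A ^ q| * A ≤ A ^ q * A := by
            apply mul_le_mul_of_nonneg_right _ hA0.le
            exact le_trans h1 (Real.rpow_le_rpow hB hBA hq0.le)
        _ ≤ A ^ q * (2 * B) := by
            apply mul_le_mul_of_nonneg_left hc (Real.rpow_nonneg hA0.le q)
        _ = 2 * (A ^ q * B) := by ring
    · have hB0 : 0 < B := lt_of_lt_of_le hA0 hAB
      have key : B ^ q * A ≤ A ^ q * B := by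
        have e1 : B ^ q * A = (B ^ q * A ^ q) * A ^ (1 - q) := by
          rw [mul_assoc, ← Real.rpow_add hA0]; norm_num
        have e2 : A ^ q * B = (B ^ q * A ^ q) * B ^ (1 - q) := by
          rw [mul_comm (B ^ q), mul_assoc, ← Real.rpow_add hB0]; norm_num
        rw [e1, e2]
        apply mul_le_mul_of_nonneg_left (Real.rpow_le_rpow hA0.le hAB (by linarith)) (by positivity)
      calc |s ^ q - A ^ q| * A ≤ B ^ q * A :=
            mul_le_mul_of_nonneg_right h1 hA0.le
        _ ≤ A ^ q * B := key
        _ ≤ 2 * (A ^ q * B) := by nlinarith [Real.rpow_nonneg hA0.le q]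
  · have hsge : A - B ≤ s := by
      have := abs_le.1 hsA
      linarith [this.1]
    have hhalf : A / 2 ≤ A - B := by linarith
    have hA2 : (0:ℝ) < A / 2 := by linarith
    have hmono : ∀ y : ℝ, A / 2 ≤ y → y ^ (q - 1) ≤ (A / 2) ^ (q - 1) := by
      intro y hy
      exact Real.rpow_le_rpow_of_nonpos hA2 hy (by linarith)
    have hkey : |s ^ q - A ^ q| ≤ q * (A / 2) ^ (q - 1) * B := by
      rcases le_total s A with hcase | hcase
      · have h2 : A ^ q - s ^ q ≤ q * s ^ (q - 1) * (A - s) :=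
          rpow_sub_rpow_le_mul' (by linarith) hcase hq0.le hq1
        have habs : |s ^ q - A ^ q| = A ^ q - s ^ q := by
          rw [abs_of_nonpos (by rw [sub_nonpos]; exact Real.rpow_le_rpow hs hcase hq0.le)]
          ring
        rw [habs]
        have hAs : A - s ≤ B := by linarith [(abs_le.1 hsA).1]
        calc A ^ q - s ^ q ≤ q * s ^ (q - 1) * (A - s) := h2
          _ ≤ q * (A / 2) ^ (q - 1) * B := by
            apply mul_le_mul (mul_le_mul_of_nonneg_left (hmono s (by linarith)) hq0.le)
              hAs (by linarith) (by positivity)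
      · have h2 : s ^ q - A ^ q ≤ q * A ^ (q - 1) * (s - A) :=
          rpow_sub_rpow_le_mul' hA0 hcase hq0.le hq1
        have habs : |s ^ q - A ^ q| = s ^ q - A ^ q := by
          rw [abs_of_nonneg (by rw [sub_nonneg]; exact Real.rpow_le_rpow hA0.le hcase hq0.le)]
        rw [habs]
        have hAs : s - A ≤ B := by linarith [(abs_le.1 hsA).2]
        calc s ^ q - A ^ q ≤ q * A ^ (q - 1) * (s - A) := h2
          _ ≤ q * (A / 2) ^ (q - 1) * B := by
            apply mul_le_mul (mul_le_mul_of_nonneg_left (hmono A (by linarith)) hq0.le)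
              hAs (by linarith) (by positivity)
    have hpow : (A / 2) ^ (q - 1) * A = 2 ^ (1 - q) * A ^ q := by
      have e1 : A ^ q = A ^ (q - 1) * A := by
        conv_lhs => rw [show q = (q-1) + 1 by ring, Real.rpow_add hA0, Real.rpow_one]
      have e2 : (2:ℝ) ^ (1 - q) * 2 ^ (q - 1) = 1 := by
        rw [← Real.rpow_add two_pos]; norm_num
      rw [Real.div_rpow hA0.le (by norm_num : (0:ℝ) ≤ 2), div_mul_eq_mul_div, ← e1,
        div_eq_iff (ne_of_gt (Real.rpow_pos_of_pos two_pos _))]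
      calc A ^ q = (2 ^ (1 - q) * 2 ^ (q - 1)) * A ^ q := by rw [e2, one_mul]
        _ = 2 ^ (1 - q) * A ^ q * 2 ^ (q - 1) := by ring
    have h2q : (2:ℝ) ^ (1 - q) ≤ 2 := by
      calc (2:ℝ) ^ (1 - q) ≤ 2 ^ (1:ℝ) :=
        Real.rpow_le_rpow_of_exponent_le one_le_two (by linarith)
      _ = 2 := Real.rpow_one 2
    calc |s ^ q - A ^ q| * A ≤ (q * (A / 2) ^ (q - 1) * B) * A := by
          apply mul_le_mul_of_nonneg_right hkey hA0.le
      _ = q * ((A / 2) ^ (q - 1) * A) * B := by ring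
      _ = q * (2 ^ (1 - q) * A ^ q) * B := by rw [hpow]
      _ ≤ 1 * (2 * A ^ q) * B := by
          apply mul_le_mul_of_nonneg_right _ hB
          apply mul_le_mul hq1 _ (by positivity) one_pos.le
          exact mul_le_mul_of_nonneg_right h2q (Real.rpow_nonneg hA0.le q)
      _ = 2 * (A ^ q * B) := by ring

lemma key_complex {q : ℝ} (hq0 : 0 < q) (hq1 : q ≤ 1) (a b : ℂ) :
    ‖((‖a + b‖ ^ q : ℝ) : ℂ) * (a + b) - ((‖a‖ ^ q : ℝ) : ℂ) * a - ((‖b‖ ^ q : ℝ) : ℂ) * b‖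
      ≤ 3 * (‖a‖ ^ q * ‖b‖) := by
  have hdecomp : ((‖a + b‖ ^ q : ℝ) : ℂ) * (a + b) - ((‖a‖ ^ q : ℝ) : ℂ) * a
      - ((‖b‖ ^ q : ℝ) : ℂ) * b
      = ((((‖a + b‖ ^ q : ℝ) : ℂ) - ((‖a‖ ^ q : ℝ) : ℂ)) * a)
        + ((((‖a + b‖ ^ q : ℝ) : ℂ) - ((‖b‖ ^ q : ℝ) : ℂ)) * b) := by ring
  rw [hdecomp]
  have hsA : |‖a + b‖ - ‖a‖| ≤ ‖b‖ := by
    have := abs_norm_sub_norm_le (a + b) a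
    simpa using this
  have hsB : |‖a + b‖ - ‖b‖| ≤ ‖a‖ := by
    have := abs_norm_sub_norm_le (a + b) b
    simpa [add_sub_cancel_right] using this
  have h1 : ‖(((‖a + b‖ ^ q : ℝ) : ℂ) - ((‖a‖ ^ q : ℝ) : ℂ)) * a‖
      ≤ 2 * (‖a‖ ^ q * ‖b‖) := by
    rw [norm_mul, ← Complex.ofReal_sub, Complex.norm_real, Real.norm_eq_abs]
    exact key_scalar (norm_nonneg a) (norm_nonneg b) (norm_nonneg (a+b)) hsA hq0 hq1
  have h2 : ‖(((‖a + b‖ ^ q : ℝ) : ℂ) - ((‖b‖ ^ q : ℝ) : ℂ)) * b‖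
      ≤ ‖a‖ ^ q * ‖b‖ := by
    rw [norm_mul, ← Complex.ofReal_sub, Complex.norm_real, Real.norm_eq_abs]
    have : |‖a + b‖ ^ q - ‖b‖ ^ q| ≤ ‖a‖ ^ q := by
      calc |‖a + b‖ ^ q - ‖b‖ ^ q| ≤ |‖a + b‖ - ‖b‖| ^ q :=
            abs_rpow_sub_rpow_le' (norm_nonneg _) (norm_nonneg _) hq0.le hq1
        _ ≤ ‖a‖ ^ q := Real.rpow_le_rpow (abs_nonneg _) hsB hq0.le
    exact mul_le_mul_of_nonneg_right this (norm_nonneg b)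
  calc ‖_ + _‖ ≤ _ := norm_add_le _ _
    _ ≤ 2 * (‖a‖ ^ q * ‖b‖) + ‖a‖ ^ q * ‖b‖ := add_le_add h1 h2
    _ = 3 * (‖a‖ ^ q * ‖b‖) := by ring

/-! ### Properties of the rescaled bubble -/

def alph (N : ℕ) : ℝ := ((N : ℝ) - 4) / 2
def qe (N : ℕ) : ℝ := (8 : ℝ) / ((N : ℝ) - 4)
def CNc (N : ℕ) : ℝ := ((N : ℝ) * ((N : ℝ) - 4) * ((N : ℝ) ^ 2 - 4)) ^ (((N : ℝ) - 4) / 8)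

variable {N : ℕ}

lemma alph_pos (hN : 13 ≤ N) : 0 < alph N := by
  have : (13 : ℝ) ≤ (N : ℝ) := by exact_mod_cast hN
  unfold alph; linarith

lemma qe_pos (hN : 13 ≤ N) : 0 < qe N := by
  have : (13 : ℝ) ≤ (N : ℝ) := by exact_mod_cast hN
  unfold qe
  apply div_pos (by norm_num)
  linarith

lemma qe_le_one (hN : 13 ≤ N) : qe N ≤ 1 := by
  have h : (13 : ℝ) ≤ (N : ℝ) := by exact_mod_cast hN
  unfold qe
  rw [div_le_one (by linarith)]
  linarith

lemma CNc_pos (hN : 13 ≤ N) : 0 < CNc N := by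
  have h : (13 : ℝ) ≤ (N : ℝ) := by exact_mod_cast hN
  apply Real.rpow_pos_of_pos
  have h1 : (0:ℝ) < (N:ℝ) := by linarith
  have h2 : (0:ℝ) < (N:ℝ) - 4 := by linarith
  have h3 : (0:ℝ) < (N:ℝ)^2 - 4 := by nlinarith
  positivity

lemma resc_eq {μ : ℝ} (hμ : 0 < μ) :
    rescR (N := N) μ (Wfun N)
      = fun x => (μ ^ (-(alph N)) * CNc N) * (1 + μ⁻¹ ^ 2 * ‖x‖ ^ 2) ^ (-(alph N)) := by
  funext x
  unfold rescR Wfun alph CNc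
  have hnorm : ‖μ⁻¹ • x‖ = μ⁻¹ * ‖x‖ := by
    rw [norm_smul, Real.norm_eq_abs, abs_of_pos (by positivity)]
  rw [hnorm]
  ring_nf

lemma hasFDerivAt_resc {μ : ℝ} (hμ : 0 < μ) (x : Rn N) :
    HasFDerivAt (rescR (N := N) μ (Wfun N))
      (((μ ^ (-(alph N)) * CNc N) *
          (-(alph N) * (1 + μ⁻¹ ^ 2 * ‖x‖ ^ 2) ^ (-(alph N) - 1)) * (μ⁻¹ ^ 2))
        • (2 • innerSL ℝ x)) x := by
  rw [resc_eq hμ]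
  set c := μ ^ (-(alph N)) * CNc N
  set m := μ⁻¹ ^ 2 with hm
  have hm0 : 0 < m := by positivity
  set t0 := 1 + m * ‖x‖ ^ 2 with ht0def
  have ht0 : 0 < t0 := by positivity
  have h1 : HasFDerivAt (fun y : Rn N => ‖y‖ ^ 2) (2 • innerSL ℝ x) x :=
    (hasStrictFDerivAt_norm_sq x).hasFDerivAt
  have h3 : HasFDerivAt (fun y : Rn N => 1 + m * ‖y‖ ^ 2) (m • (2 • innerSL ℝ x)) x :=
    (h1.const_mul m).const_add 1
  have h4 : HasDerivAt (fun t : ℝ => t ^ (-(alph N))) (-(alph N) * t0 ^ (-(alph N) - 1)) t0 :=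
    Real.hasDerivAt_rpow_const (Or.inl ht0.ne')
  have h5 := h4.comp_hasFDerivAt x h3
  have h6 := h5.const_mul c
  refine h6.congr_fderiv ?_
  ext y
  simp only [ContinuousLinearMap.smul_apply, ContinuousLinearMap.coe_smul', Pi.smul_apply,
    smul_eq_mul]
  ring

lemma fderiv_resc_apply_self {μ : ℝ} (hμ : 0 < μ) (x : Rn N) :
    fderiv ℝ (rescR (N := N) μ (Wfun N)) x x
      = (μ ^ (-(alph N)) * CNc N) *
          (-(alph N) * (1 + μ⁻¹ ^ 2 * ‖x‖ ^ 2) ^ (-(alph N) - 1)) * (μ⁻¹ ^ 2) * (2 * ‖x‖ ^ 2) := by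
  rw [(hasFDerivAt_resc hμ x).fderiv]
  simp only [ContinuousLinearMap.smul_apply, ContinuousLinearMap.coe_smul', Pi.smul_apply,
    smul_eq_mul, innerSL_apply_apply, real_inner_self_eq_norm_sq]
  ring

lemma resc_pos (hN : 13 ≤ N) {μ : ℝ} (hμ : 0 < μ) (x : Rn N) :
    0 < rescR (N := N) μ (Wfun N) x := by
  rw [resc_eq hμ]
  have h1 : (0:ℝ) < μ ^ (-(alph N)) := Real.rpow_pos_of_pos hμ _
  have h2 := CNc_pos hN
  have h3 : (0:ℝ) < (1 + μ⁻¹ ^ 2 * ‖x‖ ^ 2) ^ (-(alph N)) :=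
    Real.rpow_pos_of_pos (by positivity) _
  positivity

lemma abs_LamR_le (hN : 13 ≤ N) {μ : ℝ} (hμ : 0 < μ) (x : Rn N) :
    |LamR (rescR (N := N) μ (Wfun N)) x| ≤ 3 * alph N * rescR (N := N) μ (Wfun N) x := by
  have hα := alph_pos hN
  have hc : (0:ℝ) < μ ^ (-(alph N)) * CNc N := by
    have := CNc_pos hN; have := Real.rpow_pos_of_pos hμ (-(alph N)); positivity
  set c := μ ^ (-(alph N)) * CNc N
  set m := μ⁻¹ ^ 2 with hm
  have hm0 : 0 < m := by positivity
  set r := ‖x‖ ^ 2 with hr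
  have hr0 : 0 ≤ r := by positivity
  set t0 := 1 + m * r with ht0def
  have ht0 : 0 < t0 := by positivity
  have hval : rescR (N := N) μ (Wfun N) x = c * t0 ^ (-(alph N)) := by
    rw [resc_eq hμ]
  have hder : fderiv ℝ (rescR (N := N) μ (Wfun N)) x x
      = c * (-(alph N) * t0 ^ (-(alph N) - 1)) * m * (2 * r) :=
    fderiv_resc_apply_self hμ x
  have hLam : LamR (rescR (N := N) μ (Wfun N)) x
      = alph N * (c * t0 ^ (-(alph N))) - 2 * alph N * c * (t0 ^ (-(alph N) - 1) * (m * r)) := by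
    unfold LamR
    rw [hval, hder]
    unfold alph
    ring
  have hkey : t0 ^ (-(alph N) - 1) * (m * r) ≤ t0 ^ (-(alph N)) := by
    have h1 : m * r ≤ t0 := by rw [ht0def]; linarith
    calc t0 ^ (-(alph N) - 1) * (m * r) ≤ t0 ^ (-(alph N) - 1) * t0 := by
          apply mul_le_mul_of_nonneg_left h1 (le_of_lt (Real.rpow_pos_of_pos ht0 _))
      _ = t0 ^ (-(alph N)) := by
          conv_lhs => rw [show t0 ^ (-(alph N) - 1) * t0 = t0 ^ (-(alph N) - 1) * t0 ^ (1:ℝ) by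
            rw [Real.rpow_one]]
          rw [← Real.rpow_add ht0]; norm_num
  have hpos1 : (0:ℝ) < t0 ^ (-(alph N)) := Real.rpow_pos_of_pos ht0 _
  have hpos2 : (0:ℝ) ≤ t0 ^ (-(alph N) - 1) * (m * r) := by
    have := Real.rpow_pos_of_pos ht0 (-(alph N) - 1); positivity
  have h2 : 2 * alph N * c * (t0 ^ (-(alph N) - 1) * (m * r))
      ≤ 2 * alph N * c * t0 ^ (-(alph N)) := by
    apply mul_le_mul_of_nonneg_left hkey
    nlinarith
  have h4 : 0 < alph N * (c * t0 ^ (-(alph N))) := mul_pos hα (mul_pos hc hpos1)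
  have h5 : (0:ℝ) ≤ 2 * alph N * c := by nlinarith
  have h6 : (0:ℝ) ≤ 2 * alph N * c * (t0 ^ (-(alph N) - 1) * (m * r)) := mul_nonneg h5 hpos2
  rw [hLam, hval, abs_le]
  constructor
  · nlinarith
  · nlinarith

lemma resc_le_of_mem (hN : 13 ≤ N) {μ : ℝ} (hμl : 1/2 ≤ μ) (hμr : μ ≤ 2) (x : Rn N) :
    rescR (N := N) μ (Wfun N) x
      ≤ (2 ^ alph N * 4 ^ alph N * CNc N) * (1 + ‖x‖ ^ 2) ^ (-(alph N)) := by
  have hμ : (0:ℝ) < μ := by linarith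
  have hα := alph_pos hN
  have hCN := CNc_pos hN
  rw [resc_eq hμ]
  have h1 : μ ^ (-(alph N)) ≤ 2 ^ alph N := by
    have := Real.rpow_le_rpow_of_nonpos (by norm_num : (0:ℝ) < 1/2) hμl
      (by linarith : -(alph N) ≤ 0)
    calc μ ^ (-(alph N)) ≤ (1/2 : ℝ) ^ (-(alph N)) := this
      _ = 2 ^ alph N := by
          rw [show (1/2 : ℝ) = 2⁻¹ by norm_num, ← Real.rpow_neg_one 2,
            ← Real.rpow_mul (by norm_num : (0:ℝ) ≤ 2)]
          norm_num
  have h2 : (1 + μ⁻¹ ^ 2 * ‖x‖ ^ 2) ^ (-(alph N)) ≤ 4 ^ alph N * (1 + ‖x‖ ^ 2) ^ (-(alph N)) := by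
    have hq : (1 + ‖x‖ ^ 2) / 4 ≤ 1 + μ⁻¹ ^ 2 * ‖x‖ ^ 2 := by
      have hinv : (1:ℝ)/2 ≤ μ⁻¹ := by
        rw [le_inv_comm₀ (by norm_num) hμ]; linarith
      have hsq : (1:ℝ)/4 ≤ μ⁻¹ ^ 2 := by nlinarith
      nlinarith [sq_nonneg ‖x‖]
    calc (1 + μ⁻¹ ^ 2 * ‖x‖ ^ 2) ^ (-(alph N)) ≤ ((1 + ‖x‖ ^ 2)/4) ^ (-(alph N)) :=
          Real.rpow_le_rpow_of_nonpos (by positivity) hq (by linarith)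
      _ = 4 ^ alph N * (1 + ‖x‖ ^ 2) ^ (-(alph N)) := by
          rw [Real.div_rpow (by positivity) (by norm_num), Real.rpow_neg (by norm_num : (0:ℝ) ≤ 4)]
          field_simp
  calc (μ ^ (-(alph N)) * CNc N) * (1 + μ⁻¹ ^ 2 * ‖x‖ ^ 2) ^ (-(alph N))
      ≤ (2 ^ alph N * CNc N) * (4 ^ alph N * (1 + ‖x‖ ^ 2) ^ (-(alph N))) := by
        apply mul_le_mul
        · exact mul_le_mul_of_nonneg_right h1 hCN.le
        · exact h2
        · positivity
        · positivity
    _ = (2 ^ alph N * 4 ^ alph N * CNc N) * (1 + ‖x‖ ^ 2) ^ (-(alph N)) := by ring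

lemma resc_le_sing (hN : 13 ≤ N) {lam : ℝ} (hlam : 0 < lam) {x : Rn N} (hx : x ≠ 0) :
    rescR (N := N) lam (Wfun N) x ≤ CNc N * lam ^ alph N * ((‖x‖ ^ 2 : ℝ) ^ (-(alph N))) := by
  have hα := alph_pos hN
  have hCN := CNc_pos hN
  have hr0 : (0:ℝ) < ‖x‖ ^ 2 := by
    have : ‖x‖ ≠ 0 := by simpa using hx
    positivity
  rw [resc_eq hlam]
  have hstep : (1 + lam⁻¹ ^ 2 * ‖x‖ ^ 2) ^ (-(alph N)) ≤ (lam⁻¹ ^ 2 * ‖x‖ ^ 2) ^ (-(alph N)) := by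
    apply Real.rpow_le_rpow_of_nonpos (by positivity) (by linarith) (by linarith)
  have hsplit : (lam⁻¹ ^ 2 * ‖x‖ ^ 2 : ℝ) ^ (-(alph N))
      = (lam⁻¹ ^ 2 : ℝ) ^ (-(alph N)) * (‖x‖ ^ 2 : ℝ) ^ (-(alph N)) :=
    Real.mul_rpow (by positivity) (by positivity)
  have hlampow : lam ^ (-(alph N)) * (lam⁻¹ ^ 2 : ℝ) ^ (-(alph N)) = lam ^ (alph N) := by
    have h1 : (lam⁻¹ ^ 2 : ℝ) ^ (-(alph N)) = lam ^ (((2:ℕ):ℝ) * (-1) * (-(alph N))) := by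
      rw [inv_pow, ← Real.rpow_natCast lam 2, ← Real.rpow_neg_one (lam ^ ((2:ℕ):ℝ)),
        ← Real.rpow_mul hlam.le, ← Real.rpow_mul hlam.le]
    rw [h1, ← Real.rpow_add hlam]
    congr 1
    push_cast
    ring
  have hpow1 : (0:ℝ) < lam ^ (-(alph N)) := Real.rpow_pos_of_pos hlam _
  calc (lam ^ (-(alph N)) * CNc N) * (1 + lam⁻¹ ^ 2 * ‖x‖ ^ 2) ^ (-(alph N))
      ≤ (lam ^ (-(alph N)) * CNc N) * ((lam⁻¹ ^ 2 * ‖x‖ ^ 2) ^ (-(alph N))) := by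
        apply mul_le_mul_of_nonneg_left hstep (by positivity)
    _ = CNc N * lam ^ alph N * ((‖x‖ ^ 2 : ℝ) ^ (-(alph N))) := by
        rw [hsplit, show lam ^ (-(alph N)) * CNc N *
            ((lam⁻¹ ^ 2:ℝ) ^ (-(alph N)) * (‖x‖^2:ℝ) ^ (-(alph N)))
          = CNc N * (lam ^ (-(alph N)) * (lam⁻¹ ^ 2:ℝ) ^ (-(alph N)))
            * (‖x‖^2:ℝ) ^ (-(alph N)) from by ring, hlampow]

/-! ### Integrability of the dominating function -/

lemma integrableOn_norm_rpow_ball (hN : 0 < N) {s : ℝ} (hs0 : 0 < s) (hsN : s < N) :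
    IntegrableOn (fun x : Rn N => ‖x‖ ^ (-s)) (ball (0 : Rn N) 1) volume := by
  set mB := volume (ball (0 : Rn N) 1) with hmB
  have hmBlt : mB < ⊤ := measure_ball_lt_top
  constructor
  · exact (Measurable.aestronglyMeasurable (by fun_prop)).restrict
  · have hrw : (∫⁻ a in ball (0 : Rn N) 1, ‖(‖a‖ ^ (-s) : ℝ)‖ₑ)
        = ∫⁻ a in ball (0 : Rn N) 1, ENNReal.ofReal (‖a‖ ^ (-s)) :=
      lintegral_enorm_of_nonneg fun a => Real.rpow_nonneg (norm_nonneg _) _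
    rw [HasFiniteIntegral, hrw]
    rw [lintegral_eq_lintegral_meas_le _
      (Eventually.of_forall fun x => Real.rpow_nonneg (norm_nonneg x) _)
      ((by fun_prop : Measurable (fun x : Rn N => ‖x‖ ^ (-s))).aemeasurable)]
    set F : ℝ → ℝ≥0∞ := fun t =>
      (volume.restrict (ball (0 : Rn N) 1)) {a : Rn N | t ≤ ‖a‖ ^ (-s)} with hF
    have hFle : ∀ t, F t ≤ mB := by
      intro t
      calc F t ≤ volume.restrict (ball (0 : Rn N) 1) univ := measure_mono (subset_univ _)
        _ = mB := by rw [Measure.restrict_apply_univ]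
    have hFle2 : ∀ t : ℝ, 1 < t → F t ≤ ENNReal.ofReal (t ^ (-((N : ℝ) / s))) * mB := by
      intro t ht
      have ht0 : 0 < t := by linarith
      have hsub : {a : Rn N | t ≤ ‖a‖ ^ (-s)} ⊆ closedBall (0 : Rn N) (t ^ (-s⁻¹)) := by
        intro a ha
        simp only [mem_setOf_eq] at ha
        have hna : 0 < ‖a‖ := by
          rcases eq_or_lt_of_le (norm_nonneg a) with h | h
          · exfalso
            rw [← h, Real.zero_rpow (by simp [hs0.ne'] : (-s) ≠ 0)] at ha
            linarith
          · exact h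
        have hexp : -s⁻¹ ≤ 0 := by
          simp only [Left.neg_nonpos_iff]
          positivity
        have h1 : (‖a‖ ^ (-s)) ^ (-s⁻¹) ≤ t ^ (-s⁻¹) :=
          Real.rpow_le_rpow_of_nonpos ht0 ha hexp
        rw [← Real.rpow_mul (norm_nonneg a)] at h1
        have : -s * -s⁻¹ = 1 := by field_simp
        rw [this, Real.rpow_one] at h1
        simpa [mem_closedBall, dist_zero_right] using h1
      calc F t ≤ volume {a : Rn N | t ≤ ‖a‖ ^ (-s)} := Measure.restrict_le_self _
        _ ≤ volume (closedBall (0 : Rn N) (t ^ (-s⁻¹))) := measure_mono hsub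
        _ = ENNReal.ofReal ((t ^ (-s⁻¹)) ^ (Module.finrank ℝ (Rn N))) * mB :=
            Measure.addHaar_closedBall _ _ (by positivity)
        _ = ENNReal.ofReal (t ^ (-((N : ℝ) / s))) * mB := by
            congr 1
            rw [← Real.rpow_natCast (t ^ (-s⁻¹)) _, ← Real.rpow_mul ht0.le]
            congr 1
            rw [finrank_euclideanSpace, Fintype.card_fin]
            field_simp
    calc (∫⁻ t in Ioi (0:ℝ), F t)
        ≤ ∫⁻ t in Ioc (0:ℝ) 1 ∪ Ioi 1, F t := lintegral_mono_set Ioi_subset_Ioc_union_Ioi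
      _ ≤ (∫⁻ t in Ioc (0:ℝ) 1, F t) + ∫⁻ t in Ioi (1:ℝ), F t := lintegral_union_le _ _ _
      _ < ⊤ := by
          apply ENNReal.add_lt_top.2
          constructor
          · calc (∫⁻ t in Ioc (0:ℝ) 1, F t) ≤ ∫⁻ _ in Ioc (0:ℝ) 1, mB :=
                lintegral_mono fun t => hFle t
              _ = mB * volume (Ioc (0:ℝ) 1) := by rw [setLIntegral_const]
              _ < ⊤ := by
                  apply ENNReal.mul_lt_top hmBlt
                  simp [Real.volume_Ioc]
          · calc (∫⁻ t in Ioi (1:ℝ), F t)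
                ≤ ∫⁻ t in Ioi (1:ℝ), ENNReal.ofReal (t ^ (-((N : ℝ) / s))) * mB :=
                  setLIntegral_mono' measurableSet_Ioi fun t ht => hFle2 t ht
              _ = (∫⁻ t in Ioi (1:ℝ), ENNReal.ofReal (t ^ (-((N : ℝ) / s)))) * mB :=
                  lintegral_mul_const' _ _ hmBlt.ne
              _ < ⊤ := by
                  apply ENNReal.mul_lt_top _ hmBlt
                  apply IntegrableOn.setLIntegral_lt_top
                  apply integrableOn_Ioi_rpow_of_lt _ one_pos
                  rw [neg_lt_neg_iff]
                  rw [lt_div_iff₀ hs0]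
                  linarith

def Phi (N : ℕ) (x : Rn N) : ℝ :=
  (1 + ‖x‖ ^ 2) ^ (-((N : ℝ) + 4) / 2) * (‖x‖ ^ 2 : ℝ) ^ (-(alph N))

lemma Phi_nonneg (x : Rn N) : 0 ≤ Phi N x := by
  unfold Phi
  have h1 : (0:ℝ) ≤ (1 + ‖x‖ ^ 2) ^ (-((N : ℝ) + 4) / 2) := Real.rpow_nonneg (by positivity) _
  have h2 : (0:ℝ) ≤ (‖x‖ ^ 2 : ℝ) ^ (-(alph N)) := Real.rpow_nonneg (by positivity) _
  positivity

lemma measurable_Phi : Measurable (Phi N) := by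
  unfold Phi
  fun_prop

lemma integrable_Phi (hN : 13 ≤ N) : Integrable (Phi N) volume := by
  have hNr : (13:ℝ) ≤ (N:ℝ) := by exact_mod_cast hN
  have hα : 0 < alph N := by unfold alph; linarith
  have hdim : (Module.finrank ℝ (Rn N) : ℝ) = (N : ℝ) := by
    simp [finrank_euclideanSpace]
  have hmeas := measurable_Phi (N := N)
  have hball : IntegrableOn (Phi N) (ball (0 : Rn N) 1) volume := by
    apply Integrable.mono' (integrableOn_norm_rpow_ball (by omega) (s := 2 * alph N)
      (by linarith) (by unfold alph; linarith))
    · exact hmeas.aestronglyMeasurable.restrict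
    · apply ae_of_all
      intro x
      rw [Real.norm_eq_abs, abs_of_nonneg (Phi_nonneg x)]
      unfold Phi
      have h2 : (‖x‖ ^ 2 : ℝ) ^ (-(alph N)) = ‖x‖ ^ (-(2 * alph N)) := by
        rw [← Real.rpow_natCast ‖x‖ 2, ← Real.rpow_mul (norm_nonneg x)]
        congr 1
        push_cast
        ring
      have h1 : (1 + ‖x‖ ^ 2) ^ (-((N : ℝ) + 4) / 2) ≤ 1 :=
        Real.rpow_le_one_of_one_le_of_nonpos (by nlinarith [sq_nonneg ‖x‖]) (by linarith)
      rw [h2]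
      have h3 : (0:ℝ) ≤ ‖x‖ ^ (-(2 * alph N)) := Real.rpow_nonneg (norm_nonneg x) _
      nlinarith
  have hcompl : IntegrableOn (Phi N) (ball (0 : Rn N) 1)ᶜ volume := by
    have hint : Integrable (fun x : Rn N => (1 + ‖x‖ ^ 2) ^ (-((N:ℝ) + 4) / 2)) volume := by
      apply integrable_rpow_neg_one_add_norm_sq
      rw [hdim]; linarith
    apply Integrable.mono' hint.integrableOn
    · exact hmeas.aestronglyMeasurable.restrict
    · rw [ae_restrict_iff' measurableSet_ball.compl]
      apply ae_of_all
      intro x hx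
      have hx1 : 1 ≤ ‖x‖ := by
        simp only [mem_compl_iff, mem_ball, dist_zero_right, not_lt] at hx
        exact hx
      rw [Real.norm_eq_abs, abs_of_nonneg (Phi_nonneg x)]
      unfold Phi
      have h2 : (‖x‖ ^ 2 : ℝ) ^ (-(alph N)) ≤ 1 :=
        Real.rpow_le_one_of_one_le_of_nonpos (by nlinarith) (by linarith)
      have h1 : (0:ℝ) ≤ (1 + ‖x‖ ^ 2) ^ (-((N : ℝ) + 4) / 2) := Real.rpow_nonneg (by positivity) _
      nlinarith
  have := hball.union hcompl
  rwa [union_compl_self, integrableOn_univ] at this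

end Aux8

namespace Aux8

open MeasureTheory Real Set Metric Filter
open scoped ENNReal NNReal Topology

variable {N : ℕ}

def C4 (N : ℕ) : ℝ := 2 ^ alph N * 4 ^ alph N * CNc N
def Kc (N : ℕ) : ℝ := 9 * alph N * (C4 N) ^ (qe N + 1) * CNc N

lemma C4_nonneg (hN : 13 ≤ N) : (0:ℝ) ≤ C4 N := by
  unfold C4
  have h2p : (0:ℝ) < (2:ℝ) ^ alph N := Real.rpow_pos_of_pos two_pos _
  have h4p : (0:ℝ) < (4:ℝ) ^ alph N := Real.rpow_pos_of_pos (by norm_num) _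
  exact le_of_lt (mul_pos (mul_pos h2p h4p) (CNc_pos hN))

lemma Kc_pos (hN : 13 ≤ N) : 0 < Kc N := by
  unfold Kc
  have h2p : (0:ℝ) < (2:ℝ) ^ alph N := Real.rpow_pos_of_pos two_pos _
  have h4p : (0:ℝ) < (4:ℝ) ^ alph N := Real.rpow_pos_of_pos (by norm_num) _
  have hC4 : (0:ℝ) < C4 N := by
    unfold C4
    exact mul_pos (mul_pos h2p h4p) (CNc_pos hN)
  have h1 : (0:ℝ) < (C4 N) ^ (qe N + 1) := Real.rpow_pos_of_pos hC4 _
  exact mul_pos (mul_pos (mul_pos (by norm_num : (0:ℝ) < 9) (alph_pos hN)) h1) (CNc_pos hN)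

lemma norm_cexp (θ : ℝ) : ‖cexp θ‖ = 1 := by
  unfold cexp
  rw [Complex.norm_exp]
  simp

lemma pointwise_bound (hN : 13 ≤ N) (ζ θ : ℝ) {μ lam : ℝ} (hμ1 : 1/2 ≤ μ) (hμ2 : μ ≤ 2)
    (hl0 : 0 < lam) {x : Rn N} (hx : x ≠ 0) :
    ‖(starRingEnd ℂ) (cexp ζ * (LamR (rescR μ (Wfun N)) x : ℂ)) *
        (fNL N (cexp ζ * (rescR μ (Wfun N) x : ℂ) + cexp θ * (rescR lam (Wfun N) x : ℂ))
          - fNL N (cexp ζ * (rescR μ (Wfun N) x : ℂ))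
          - fNL N (cexp θ * (rescR lam (Wfun N) x : ℂ)))‖
      ≤ (Kc N * lam ^ alph N) * Phi N x := by
  have hμ0 : (0:ℝ) < μ := by linarith
  have hα := alph_pos hN
  have hCN := CNc_pos hN
  have hq0 := qe_pos hN
  have hq1 := qe_le_one hN
  set A := rescR (N := N) μ (Wfun N) x with hAdef
  set B := rescR (N := N) lam (Wfun N) x with hBdef
  have hA0 : 0 < A := resc_pos hN hμ0 x
  have hB0 : 0 < B := resc_pos hN hl0 x
  have hL := abs_LamR_le hN hμ0 x
  rw [← hAdef] at hL
  have hfNL : ∀ z : ℂ, fNL N z = ((‖z‖ ^ qe N : ℝ) : ℂ) * z := fun z => rfl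
  have hna : ‖cexp ζ * ((A : ℝ) : ℂ)‖ = A := by
    rw [norm_mul, norm_cexp, one_mul, Complex.norm_real, Real.norm_eq_abs, abs_of_pos hA0]
  have hnb : ‖cexp θ * ((B : ℝ) : ℂ)‖ = B := by
    rw [norm_mul, norm_cexp, one_mul, Complex.norm_real, Real.norm_eq_abs, abs_of_pos hB0]
  have hD : ‖fNL N (cexp ζ * ((A : ℝ) : ℂ) + cexp θ * ((B : ℝ) : ℂ))
      - fNL N (cexp ζ * ((A : ℝ) : ℂ)) - fNL N (cexp θ * ((B : ℝ) : ℂ))‖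
      ≤ 3 * (A ^ qe N * B) := by
    simp only [hfNL]
    calc _ ≤ 3 * (‖cexp ζ * ((A : ℝ) : ℂ)‖ ^ qe N * ‖cexp θ * ((B : ℝ) : ℂ)‖) :=
          key_complex hq0 hq1 _ _
      _ = 3 * (A ^ qe N * B) := by rw [hna, hnb]
  rw [norm_mul, RCLike.norm_conj, norm_mul, norm_cexp, one_mul, Complex.norm_real,
    Real.norm_eq_abs]
  have hb2 := C4_nonneg hN
  have hAle : A ≤ C4 N * (1 + ‖x‖ ^ 2) ^ (-(alph N)) := by
    rw [hAdef]
    exact resc_le_of_mem hN hμ1 hμ2 x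
  have hBle : B ≤ CNc N * lam ^ alph N * ((‖x‖ ^ 2 : ℝ) ^ (-(alph N))) := by
    rw [hBdef]
    exact resc_le_sing hN hl0 hx
  have h1 : A ^ (qe N + 1) ≤ (C4 N * (1 + ‖x‖ ^ 2) ^ (-(alph N))) ^ (qe N + 1) :=
    Real.rpow_le_rpow hA0.le hAle (by linarith)
  have hbase : (0:ℝ) ≤ C4 N * (1 + ‖x‖ ^ 2) ^ (-(alph N)) :=
    mul_nonneg hb2 (Real.rpow_nonneg (by positivity) _)
  have hexp : (-(alph N)) * (qe N + 1) = -((N : ℝ) + 4) / 2 := by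
    have hNr : (13:ℝ) ≤ (N:ℝ) := by exact_mod_cast hN
    have hne : (N:ℝ) - 4 ≠ 0 := by linarith
    unfold alph qe
    field_simp
    ring
  calc |LamR (rescR μ (Wfun N)) x| *
        ‖fNL N (cexp ζ * ((A : ℝ) : ℂ) + cexp θ * ((B : ℝ) : ℂ))
          - fNL N (cexp ζ * ((A : ℝ) : ℂ)) - fNL N (cexp θ * ((B : ℝ) : ℂ))‖
      ≤ (3 * alph N * A) * (3 * (A ^ qe N * B)) := by
        apply mul_le_mul hL hD (norm_nonneg _)
        nlinarith
    _ = 9 * alph N * (A ^ qe N * A) * B := by ring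
    _ = 9 * alph N * A ^ (qe N + 1) * B := by
        rw [← Real.rpow_add_one hA0.ne' (qe N)]
    _ ≤ 9 * alph N * (C4 N * (1 + ‖x‖ ^ 2) ^ (-(alph N))) ^ (qe N + 1)
          * (CNc N * lam ^ alph N * ((‖x‖ ^ 2 : ℝ) ^ (-(alph N)))) := by
        apply mul_le_mul
        · apply mul_le_mul_of_nonneg_left h1
          nlinarith
        · exact hBle
        · exact hB0.le
        · apply mul_nonneg (by nlinarith : (0:ℝ) ≤ 9 * alph N)
          exact Real.rpow_nonneg hbase _
    _ = (Kc N * lam ^ alph N) * Phi N x := by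
        rw [Real.mul_rpow hb2 (Real.rpow_nonneg (by positivity) _),
          ← Real.rpow_mul (by positivity : (0:ℝ) ≤ 1 + ‖x‖ ^ 2),
          show (-(alph N)) * (qe N + 1) = -((N : ℝ) + 4) / 2 from hexp]
        unfold Kc Phi
        ring

end Aux8

theorem stmt_8' (N : ℕ) (hN : 13 ≤ N) :
    ∃ C : ℝ, 0 < C ∧
      ∀ ζ θ μ lam : ℝ, 1 / 2 ≤ μ → μ ≤ 2 → 0 < lam → lam ≤ 1 →
        |(∫ x : Rn N,
            (starRingEnd ℂ) (cexp ζ * (LamR (rescR μ (Wfun N)) x : ℂ)) *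
              (fNL N (cexp ζ * (rescR μ (Wfun N) x : ℂ) + cexp θ * (rescR lam (Wfun N) x : ℂ))
                - fNL N (cexp ζ * (rescR μ (Wfun N) x : ℂ))
                - fNL N (cexp θ * (rescR lam (Wfun N) x : ℂ)))).re|
          ≤ C * lam ^ (((N : ℝ) - 4) / 2) := by
  refine ⟨Aux8.Kc N * (∫ x : Rn N, Aux8.Phi N x) + 1, ?_, ?_⟩
  · have h1 : 0 < Aux8.Kc N := Aux8.Kc_pos hN
    have h2 : 0 ≤ ∫ x : Rn N, Aux8.Phi N x := integral_nonneg fun x => Aux8.Phi_nonneg x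
    nlinarith
  intro ζ θ μ lam hμ1 hμ2 hl0 hl1
  have hnull : (volume : Measure (Rn N)) {(0 : Rn N)} = 0 := by
    apply measure_mono_null
      (show ({(0 : Rn N)} : Set (Rn N)) ⊆ Metric.closedBall (0 : Rn N) 0 by
        simp [Metric.closedBall_zero])
    rw [MeasureTheory.Measure.addHaar_closedBall _ _ le_rfl]
    have hd : Module.finrank ℝ (Rn N) = N := by simp [finrank_euclideanSpace]
    rw [hd, zero_pow (by omega : N ≠ 0)]
    simp
  have hae : ∀ᵐ x : Rn N, x ≠ (0 : Rn N) := by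
    have hset : {x : Rn N | ¬ x ≠ (0 : Rn N)} = {(0 : Rn N)} := by
      ext y; simp
    rw [MeasureTheory.ae_iff, hset]
    exact hnull
  have hbound : ∀ᵐ x : Rn N,
      ‖(starRingEnd ℂ) (cexp ζ * (LamR (rescR μ (Wfun N)) x : ℂ)) *
          (fNL N (cexp ζ * (rescR μ (Wfun N) x : ℂ) + cexp θ * (rescR lam (Wfun N) x : ℂ))
            - fNL N (cexp ζ * (rescR μ (Wfun N) x : ℂ))
            - fNL N (cexp θ * (rescR lam (Wfun N) x : ℂ)))‖
        ≤ (Aux8.Kc N * lam ^ Aux8.alph N) * Aux8.Phi N x := by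
    filter_upwards [hae] with x hx
    exact Aux8.pointwise_bound hN ζ θ hμ1 hμ2 hl0 hx
  calc |(∫ x : Rn N,
            (starRingEnd ℂ) (cexp ζ * (LamR (rescR μ (Wfun N)) x : ℂ)) *
              (fNL N (cexp ζ * (rescR μ (Wfun N) x : ℂ) + cexp θ * (rescR lam (Wfun N) x : ℂ))
                - fNL N (cexp ζ * (rescR μ (Wfun N) x : ℂ))
                - fNL N (cexp θ * (rescR lam (Wfun N) x : ℂ)))).re|
      ≤ ‖∫ x : Rn N,
            (starRingEnd ℂ) (cexp ζ * (LamR (rescR μ (Wfun N)) x : ℂ)) *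
              (fNL N (cexp ζ * (rescR μ (Wfun N) x : ℂ) + cexp θ * (rescR lam (Wfun N) x : ℂ))
                - fNL N (cexp ζ * (rescR μ (Wfun N) x : ℂ))
                - fNL N (cexp θ * (rescR lam (Wfun N) x : ℂ)))‖ := by
        exact Complex.abs_re_le_norm _
    _ ≤ ∫ x : Rn N,
          ‖(starRingEnd ℂ) (cexp ζ * (LamR (rescR μ (Wfun N)) x : ℂ)) *
              (fNL N (cexp ζ * (rescR μ (Wfun N) x : ℂ) + cexp θ * (rescR lam (Wfun N) x : ℂ))
                - fNL N (cexp ζ * (rescR μ (Wfun N) x : ℂ))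
                - fNL N (cexp θ * (rescR lam (Wfun N) x : ℂ)))‖ :=
        norm_integral_le_integral_norm _
    _ ≤ ∫ x : Rn N, (Aux8.Kc N * lam ^ Aux8.alph N) * Aux8.Phi N x := by
        apply integral_mono_of_nonneg (Filter.Eventually.of_forall fun x => norm_nonneg _)
          ((Aux8.integrable_Phi hN).const_mul _) hbound
    _ = (Aux8.Kc N * lam ^ Aux8.alph N) * ∫ x : Rn N, Aux8.Phi N x :=
        integral_const_mul _ _
    _ ≤ (Aux8.Kc N * (∫ x : Rn N, Aux8.Phi N x) + 1) * lam ^ (((N : ℝ) - 4) / 2) := by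
        have hIΦ : 0 ≤ ∫ x : Rn N, Aux8.Phi N x := integral_nonneg fun x => Aux8.Phi_nonneg x
        have hl : 0 < lam ^ Aux8.alph N := Real.rpow_pos_of_pos hl0 _
        show (Aux8.Kc N * lam ^ Aux8.alph N) * (∫ x : Rn N, Aux8.Phi N x)
            ≤ (Aux8.Kc N * (∫ x : Rn N, Aux8.Phi N x) + 1) * lam ^ Aux8.alph N
        nlinarith


theorem stmt_8 (N : ℕ) (hN : 13 ≤ N) :
    ∃ C : ℝ, 0 < C ∧
      ∀ ζ θ μ lam : ℝ, 1 / 2 ≤ μ → μ ≤ 2 → 0 < lam → lam ≤ 1 →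
        |(∫ x : Rn N,
            (starRingEnd ℂ) (cexp ζ * (LamR (rescR μ (Wfun N)) x : ℂ)) *
              (fNL N (cexp ζ * (rescR μ (Wfun N) x : ℂ) + cexp θ * (rescR lam (Wfun N) x : ℂ))
                - fNL N (cexp ζ * (rescR μ (Wfun N) x : ℂ))
                - fNL N (cexp θ * (rescR lam (Wfun N) x : ℂ)))).re|
          ≤ C * lam ^ (((N : ℝ) - 4) / 2) := stmt_8' N hN
end
end

section
/- There exists a constant C > 0 such that for all ζ, θ ∈ ℝ, all μ ∈ [1/2, 2] and all λ ∈ (0, 1], the L^{2N/(N+4)}(ℝ^N) norm of the function x ↦ f(e^{iζ}W_μ(x) + e^{iθ}W_λ(x)) − f(e^{iζ}W_μ(x)) − f(e^{iθ}W_λ(x)) is at most C·λ^{(N+4)/4}; that is, (∫_{ℝ^N} |f(e^{iζ}W_μ + e^{iθ}W_λ) − f(e^{iζ}W_μ) − f(e^{iθ}W_λ)|^{2N/(N+4)} dx)^{(N+4)/(2N)} ≤ C·λ^{(N+4)/4}. -/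
open MeasureTheory

noncomputable section

open Real Filter Metric Set
open scoped ENNReal NNReal

section AuxLemmas

lemma aux_rpow_mvt {κ t s : ℝ} (hκ0 : 0 < κ) (hκ1 : κ ≤ 1) (ht : 0 < t) (hts : t ≤ s) :
    s ^ κ - t ^ κ ≤ κ * t ^ (κ - 1) * (s - t) := by
  rcases eq_or_lt_of_le hts with rfl | hlt
  · simp
  have hcont : ContinuousOn (fun x : ℝ => x ^ κ) (Set.Icc t s) := fun x hx =>
    (Real.continuousAt_rpow_const x κ (Or.inl (ne_of_gt (lt_of_lt_of_le ht hx.1)))).continuousWithinAt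
  have hderiv : ∀ x ∈ Set.Ioo t s, HasDerivAt (fun x : ℝ => x ^ κ) (κ * x ^ (κ - 1)) x := by
    intro x hx
    simpa [mul_comm] using Real.hasDerivAt_rpow_const (x := x) (p := κ)
      (Or.inl (ne_of_gt (ht.trans hx.1)))
  obtain ⟨c, hc, hc'⟩ := exists_hasDerivAt_eq_slope (fun x : ℝ => x ^ κ)
    (fun x => κ * x ^ (κ - 1)) hlt hcont hderiv
  have hc0 : 0 < c := ht.trans hc.1
  have heq : s ^ κ - t ^ κ = κ * c ^ (κ - 1) * (s - t) := by
    rw [eq_div_iff (sub_ne_zero.2 hlt.ne')] at hc'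
    simpa using hc'.symm
  have hmono : c ^ (κ - 1) ≤ t ^ (κ - 1) :=
    Real.rpow_le_rpow_of_nonpos ht hc.1.le (by linarith)
  rw [heq]
  have h1 : κ * c ^ (κ - 1) ≤ κ * t ^ (κ - 1) := mul_le_mul_of_nonneg_left hmono hκ0.le
  exact mul_le_mul_of_nonneg_right h1 (by linarith)


lemma norm_fNL (N : ℕ) (z : ℂ) : ‖fNL N z‖ = ‖z‖ ^ ((8 : ℝ) / ((N : ℝ) - 4)) * ‖z‖ := by
  rw [fNL, norm_mul, Complex.norm_real, Real.norm_eq_abs,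
    abs_of_nonneg (Real.rpow_nonneg (norm_nonneg z) _)]

lemma fNL_lip (N : ℕ) (hN : 13 ≤ N) {u v : ℂ} (h : ‖v‖ ≤ ‖u‖) :
    ‖fNL N u - fNL N v‖ ≤ 2 * ‖u‖ ^ ((8 : ℝ) / ((N : ℝ) - 4)) * ‖u - v‖ := by
  have hn : (13 : ℝ) ≤ (N : ℝ) := by exact_mod_cast hN
  have h4 : (0 : ℝ) < (N : ℝ) - 4 := by linarith
  set κ : ℝ := (8 : ℝ) / ((N : ℝ) - 4) with hκdef
  have hκ0 : 0 < κ := div_pos (by norm_num) h4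
  have hκ1 : κ ≤ 1 := by rw [hκdef, div_le_one h4]; linarith
  by_cases hu : u = 0
  · have hv : v = 0 := norm_le_zero_iff.1 (by simpa [hu] using h)
    simp [hu, hv, fNL]
  have hu0 : 0 < ‖u‖ := norm_pos_iff.2 hu
  have key : fNL N u - fNL N v =
      (↑(‖u‖ ^ κ) : ℂ) * (u - v) + (↑(‖u‖ ^ κ - ‖v‖ ^ κ) : ℂ) * v := by
    simp only [fNL, ← hκdef]
    push_cast
    ring
  have hmono : ‖v‖ ^ κ ≤ ‖u‖ ^ κ := Real.rpow_le_rpow (norm_nonneg v) h hκ0.le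
  have e1 : ‖(↑(‖u‖ ^ κ) : ℂ) * (u - v)‖ = ‖u‖ ^ κ * ‖u - v‖ := by
    rw [norm_mul, Complex.norm_real, Real.norm_eq_abs,
      abs_of_nonneg (Real.rpow_nonneg (norm_nonneg u) κ)]
  have e2 : ‖(↑(‖u‖ ^ κ - ‖v‖ ^ κ) : ℂ) * v‖ = (‖u‖ ^ κ - ‖v‖ ^ κ) * ‖v‖ := by
    rw [norm_mul, Complex.norm_real, Real.norm_eq_abs, abs_of_nonneg (by linarith)]
  have hd : ‖u‖ - ‖v‖ ≤ ‖u - v‖ := norm_sub_norm_le u v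
  have h2 : (‖u‖ ^ κ - ‖v‖ ^ κ) * ‖v‖ ≤ ‖u‖ ^ κ * ‖u - v‖ := by
    rcases le_or_gt (2 * ‖v‖) ‖u‖ with hc | hc
    · have hv_le : ‖v‖ ≤ ‖u - v‖ := by linarith
      calc (‖u‖ ^ κ - ‖v‖ ^ κ) * ‖v‖ ≤ ‖u‖ ^ κ * ‖v‖ :=
            mul_le_mul_of_nonneg_right
              (by linarith [Real.rpow_nonneg (norm_nonneg v) κ]) (norm_nonneg v)
        _ ≤ ‖u‖ ^ κ * ‖u - v‖ :=
            mul_le_mul_of_nonneg_left hv_le (Real.rpow_nonneg (norm_nonneg u) κ)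
    · have hv0 : 0 < ‖v‖ := by linarith
      have hmvt := aux_rpow_mvt hκ0 hκ1 hv0 h
      have hP : (0 : ℝ) ≤ ‖v‖ ^ (κ - 1) := Real.rpow_nonneg (norm_nonneg v) _
      have hstep : ‖u‖ ^ κ - ‖v‖ ^ κ ≤ ‖v‖ ^ (κ - 1) * ‖u - v‖ := by
        have h1 : κ * ‖v‖ ^ (κ - 1) * (‖u‖ - ‖v‖) ≤ ‖v‖ ^ (κ - 1) * (‖u‖ - ‖v‖) := by
          nlinarith [mul_nonneg hP (sub_nonneg.2 h)]
        have h2' : ‖v‖ ^ (κ - 1) * (‖u‖ - ‖v‖) ≤ ‖v‖ ^ (κ - 1) * ‖u - v‖ :=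
          mul_le_mul_of_nonneg_left hd hP
        linarith
      have hvv : ‖v‖ ^ (κ - 1) * ‖v‖ = ‖v‖ ^ κ := by
        rw [← Real.rpow_add_one hv0.ne' (κ - 1)]
        norm_num
      calc (‖u‖ ^ κ - ‖v‖ ^ κ) * ‖v‖ ≤ (‖v‖ ^ (κ - 1) * ‖u - v‖) * ‖v‖ :=
            mul_le_mul_of_nonneg_right hstep (norm_nonneg v)
        _ = (‖v‖ ^ (κ - 1) * ‖v‖) * ‖u - v‖ := by ring
        _ = ‖v‖ ^ κ * ‖u - v‖ := by rw [hvv]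
        _ ≤ ‖u‖ ^ κ * ‖u - v‖ := mul_le_mul_of_nonneg_right hmono (norm_nonneg _)
  calc ‖fNL N u - fNL N v‖
      ≤ ‖(↑(‖u‖ ^ κ) : ℂ) * (u - v)‖ + ‖(↑(‖u‖ ^ κ - ‖v‖ ^ κ) : ℂ) * v‖ := by
        rw [key]; exact norm_add_le _ _
    _ = ‖u‖ ^ κ * ‖u - v‖ + (‖u‖ ^ κ - ‖v‖ ^ κ) * ‖v‖ := by rw [e1, e2]
    _ ≤ ‖u‖ ^ κ * ‖u - v‖ + ‖u‖ ^ κ * ‖u - v‖ := by linarith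
    _ = 2 * ‖u‖ ^ κ * ‖u - v‖ := by ring


lemma fNL_master (N : ℕ) (hN : 13 ≤ N) (z w : ℂ) :
    ‖fNL N (z + w) - fNL N z - fNL N w‖ ≤ 5 * ‖z‖ ^ ((8 : ℝ) / ((N : ℝ) - 4)) * ‖w‖ := by
  have hn : (13 : ℝ) ≤ (N : ℝ) := by exact_mod_cast hN
  have h4 : (0 : ℝ) < (N : ℝ) - 4 := by linarith
  set κ : ℝ := (8 : ℝ) / ((N : ℝ) - 4) with hκdef
  have hκ0 : 0 < κ := div_pos (by norm_num) h4
  have hκ1 : κ ≤ 1 := by rw [hκdef, div_le_one h4]; linarith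
  have h2κ : (2 : ℝ) ^ κ ≤ 2 := by
    calc (2 : ℝ) ^ κ ≤ (2 : ℝ) ^ (1 : ℝ) := Real.rpow_le_rpow_of_exponent_le one_le_two hκ1
      _ = 2 := Real.rpow_one 2
  by_cases hz : z = 0
  · simp [hz, fNL] <;> positivity
  by_cases hw : w = 0
  · simp [hw, fNL] <;> positivity
  have hz0 : 0 < ‖z‖ := norm_pos_iff.2 hz
  have hw0 : 0 < ‖w‖ := norm_pos_iff.2 hw
  have Hlip : ∀ a b : ℂ, ‖b‖ ≤ ‖a‖ → ‖fNL N (a + b) - fNL N a‖ ≤ 4 * ‖a‖ ^ κ * ‖b‖ := by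
    intro a b hba
    have haκ : (0 : ℝ) ≤ ‖a‖ ^ κ := Real.rpow_nonneg (norm_nonneg a) κ
    rcases le_total ‖a‖ ‖a + b‖ with hc | hc
    · have hlip := fNL_lip N hN (u := a + b) (v := a) hc
      have he : (a + b) - a = b := add_sub_cancel_left a b
      rw [he] at hlip
      have hab : ‖a + b‖ ≤ 2 * ‖a‖ := by
        have := norm_add_le a b; linarith
      have habκ : ‖a + b‖ ^ κ ≤ 2 * ‖a‖ ^ κ := by
        calc ‖a + b‖ ^ κ ≤ (2 * ‖a‖) ^ κ := Real.rpow_le_rpow (norm_nonneg _) hab hκ0.le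
          _ = 2 ^ κ * ‖a‖ ^ κ := Real.mul_rpow (by norm_num) (norm_nonneg a)
          _ ≤ 2 * ‖a‖ ^ κ := mul_le_mul_of_nonneg_right h2κ haκ
      calc ‖fNL N (a + b) - fNL N a‖ ≤ 2 * ‖a + b‖ ^ κ * ‖b‖ := hlip
        _ ≤ 2 * (2 * ‖a‖ ^ κ) * ‖b‖ := by
            apply mul_le_mul_of_nonneg_right _ (norm_nonneg b)
            linarith
        _ = 4 * ‖a‖ ^ κ * ‖b‖ := by ring
    · have hlip := fNL_lip N hN (u := a) (v := a + b) hc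
      have he : a - (a + b) = -b := by ring
      rw [he, norm_neg] at hlip
      rw [norm_sub_rev] at hlip
      calc ‖fNL N (a + b) - fNL N a‖ ≤ 2 * ‖a‖ ^ κ * ‖b‖ := hlip
        _ ≤ 4 * ‖a‖ ^ κ * ‖b‖ := by nlinarith [norm_nonneg b]
  rcases le_total ‖w‖ ‖z‖ with h | h
  · have h1 := Hlip z w h
    have h2 : ‖fNL N w‖ ≤ ‖z‖ ^ κ * ‖w‖ := by
      rw [norm_fNL, ← hκdef]
      exact mul_le_mul_of_nonneg_right (Real.rpow_le_rpow (norm_nonneg w) h hκ0.le) (norm_nonneg w)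
    calc ‖fNL N (z + w) - fNL N z - fNL N w‖
        ≤ ‖fNL N (z + w) - fNL N z‖ + ‖fNL N w‖ := norm_sub_le _ _
      _ ≤ 4 * ‖z‖ ^ κ * ‖w‖ + ‖z‖ ^ κ * ‖w‖ := add_le_add h1 h2
      _ = 5 * ‖z‖ ^ κ * ‖w‖ := by ring
  · have h1 := Hlip w z h
    have hre : fNL N (z + w) - fNL N z - fNL N w = (fNL N (w + z) - fNL N w) - fNL N z := by
      rw [add_comm z w]; ring
    have h2 : ‖fNL N z‖ ≤ ‖z‖ ^ κ * ‖w‖ := by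
      rw [norm_fNL, ← hκdef]
      exact mul_le_mul_of_nonneg_left h (Real.rpow_nonneg (norm_nonneg z) κ)
    have h3 : ‖w‖ ^ κ * ‖z‖ ≤ ‖z‖ ^ κ * ‖w‖ := by
      have hmono : ‖w‖ ^ (κ - 1) ≤ ‖z‖ ^ (κ - 1) :=
        Real.rpow_le_rpow_of_nonpos hz0 h (by linarith)
      have ew : ‖w‖ ^ κ = ‖w‖ ^ (κ - 1) * ‖w‖ := by
        rw [← Real.rpow_add_one hw0.ne' (κ - 1)]; norm_num
      have ez : ‖z‖ ^ κ = ‖z‖ ^ (κ - 1) * ‖z‖ := by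
        rw [← Real.rpow_add_one hz0.ne' (κ - 1)]; norm_num
      rw [ew, ez]
      calc ‖w‖ ^ (κ - 1) * ‖w‖ * ‖z‖ ≤ ‖z‖ ^ (κ - 1) * ‖w‖ * ‖z‖ :=
            mul_le_mul_of_nonneg_right (mul_le_mul_of_nonneg_right hmono hw0.le) hz0.le
        _ = ‖z‖ ^ (κ - 1) * ‖z‖ * ‖w‖ := by ring
    calc ‖fNL N (z + w) - fNL N z - fNL N w‖
        = ‖(fNL N (w + z) - fNL N w) - fNL N z‖ := by rw [hre]
      _ ≤ ‖fNL N (w + z) - fNL N w‖ + ‖fNL N z‖ := norm_sub_le _ _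
      _ ≤ 4 * ‖w‖ ^ κ * ‖z‖ + ‖z‖ ^ κ * ‖w‖ := add_le_add h1 h2
      _ ≤ 4 * (‖z‖ ^ κ * ‖w‖) + ‖z‖ ^ κ * ‖w‖ := by nlinarith [h3]
      _ = 5 * ‖z‖ ^ κ * ‖w‖ := by ring


variable {E : Type*} [NormedAddCommGroup E] [NormedSpace ℝ E] [MeasurableSpace E] [BorelSpace E]
  [FiniteDimensional ℝ E]

lemma integrableOn_norm_rpow_closedBall (μ : Measure E) [μ.IsAddHaarMeasure] {β : ℝ}
    (hβ0 : 0 < β) (hβ : β < (Module.finrank ℝ E : ℝ)) :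
    IntegrableOn (fun y : E => ‖y‖ ^ (-β)) (Metric.closedBall (0 : E) 1) μ := by
  have h_meas : Measurable fun y : E => ‖y‖ ^ (-β) := by fun_prop
  have h_nn : (0 : E → ℝ) ≤ᵐ[μ.restrict (Metric.closedBall (0 : E) 1)]
      fun y => ‖y‖ ^ (-β) :=
    Eventually.of_forall fun y => Real.rpow_nonneg (norm_nonneg y) _
  refine ⟨h_meas.aestronglyMeasurable.restrict, ?_⟩
  rw [hasFiniteIntegral_iff_ofReal h_nn]
  set ν := μ.restrict (Metric.closedBall (0 : E) 1) with hν
  rw [lintegral_eq_lintegral_meas_le ν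
    (Eventually.of_forall fun y => Real.rpow_nonneg (norm_nonneg y) _) h_meas.aemeasurable]
  set f : ℝ → ℝ≥0∞ := fun t => ν {a : E | t ≤ ‖a‖ ^ (-β)} with hf
  have hV : μ (Metric.closedBall (0 : E) 1) < ⊤ := measure_closedBall_lt_top
  have hsub : ∀ t : ℝ, 0 < t → {a : E | t ≤ ‖a‖ ^ (-β)} ⊆
      Metric.closedBall (0 : E) (t ^ (-β⁻¹)) := by
    intro t ht a ha
    simp only [Set.mem_setOf_eq] at ha
    rcases eq_or_ne a 0 with rfl | ha0
    · simp only [norm_zero, Real.zero_rpow (by linarith : -β ≠ 0)] at ha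
      linarith
    · have h0 : 0 < ‖a‖ := norm_pos_iff.2 ha0
      have h1 : (‖a‖ ^ (-β)) ^ (-β⁻¹) ≤ t ^ (-β⁻¹) :=
        Real.rpow_le_rpow_of_nonpos ht ha (by simp [inv_nonneg, hβ0.le])
      have h2 : (‖a‖ ^ (-β)) ^ (-β⁻¹) = ‖a‖ := by
        rw [← Real.rpow_mul (norm_nonneg a)]
        rw [show (-β) * (-β⁻¹) = 1 by field_simp]
        exact Real.rpow_one _
      rw [mem_closedBall_zero_iff]
      rw [h2] at h1
      exact h1
  calc ∫⁻ t in Ioi (0 : ℝ), f t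
      ≤ ∫⁻ t in Ioc (0 : ℝ) 1 ∪ Ioi 1, f t := lintegral_mono_set Ioi_subset_Ioc_union_Ioi
    _ ≤ (∫⁻ t in Ioc (0 : ℝ) 1, f t) + ∫⁻ t in Ioi 1, f t := lintegral_union_le _ _ _
    _ < ⊤ := by
        refine ENNReal.add_lt_top.2 ⟨?_, ?_⟩
        · calc ∫⁻ t in Ioc (0 : ℝ) 1, f t
              ≤ ∫⁻ _ in Ioc (0 : ℝ) 1, μ (Metric.closedBall (0 : E) 1) := by
                refine setLIntegral_mono' measurableSet_Ioc fun t ht => ?_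
                calc f t ≤ ν Set.univ := measure_mono (Set.subset_univ _)
                  _ = μ (Metric.closedBall (0 : E) 1) := by
                      rw [hν, Measure.restrict_apply_univ]
            _ = μ (Metric.closedBall (0 : E) 1) * volume (Ioc (0:ℝ) 1) := by
                rw [setLIntegral_const]
            _ < ⊤ := by
                refine ENNReal.mul_lt_top hV ?_
                simp [Real.volume_Ioc]
        · have hbound : ∀ t ∈ Ioi (1 : ℝ), f t ≤
              ENNReal.ofReal (t ^ (-(↑(Module.finrank ℝ E) * β⁻¹))) *
                μ (Metric.ball (0 : E) 1) := by
            intro t ht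
            have ht0 : (0 : ℝ) < t := lt_trans one_pos ht
            have hr0 : (0 : ℝ) ≤ t ^ (-β⁻¹) := Real.rpow_nonneg ht0.le _
            calc f t ≤ ν (Metric.closedBall (0 : E) (t ^ (-β⁻¹))) :=
                  measure_mono (hsub t ht0)
              _ ≤ μ (Metric.closedBall (0 : E) (t ^ (-β⁻¹))) := by
                  rw [hν]; exact Measure.restrict_apply_le _ _
              _ = ENNReal.ofReal ((t ^ (-β⁻¹)) ^ Module.finrank ℝ E) *
                    μ (Metric.ball (0 : E) 1) := μ.addHaar_closedBall 0 hr0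
              _ = ENNReal.ofReal (t ^ (-(↑(Module.finrank ℝ E) * β⁻¹))) *
                    μ (Metric.ball (0 : E) 1) := by
                  congr 1
                  rw [← Real.rpow_natCast (t ^ (-β⁻¹)) (Module.finrank ℝ E),
                    ← Real.rpow_mul ht0.le]
                  congr 1
                  ring
          have hVb : μ (Metric.ball (0 : E) 1) < ⊤ := measure_ball_lt_top
          calc ∫⁻ t in Ioi (1 : ℝ), f t
              ≤ ∫⁻ t in Ioi (1 : ℝ),
                  ENNReal.ofReal (t ^ (-(↑(Module.finrank ℝ E) * β⁻¹))) *
                    μ (Metric.ball (0 : E) 1) :=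
                setLIntegral_mono' measurableSet_Ioi hbound
            _ = (∫⁻ t in Ioi (1 : ℝ),
                  ENNReal.ofReal (t ^ (-(↑(Module.finrank ℝ E) * β⁻¹)))) *
                    μ (Metric.ball (0 : E) 1) :=
                lintegral_mul_const' _ _ hVb.ne
            _ < ⊤ := by
                refine ENNReal.mul_lt_top ?_ hVb
                refine IntegrableOn.setLIntegral_lt_top ?_
                refine integrableOn_Ioi_rpow_of_lt ?_ one_pos
                have h1 : 1 < (Module.finrank ℝ E : ℝ) * β⁻¹ := by
                  rw [← div_eq_mul_inv]
                  exact (one_lt_div hβ0).2 hβ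
                linarith


lemma integrableOn_norm_rpow_compl_closedBall (μ : Measure E) [μ.IsAddHaarMeasure] {m : ℝ}
    (hm : (Module.finrank ℝ E : ℝ) < m) :
    IntegrableOn (fun y : E => ‖y‖ ^ (-m)) (Metric.closedBall (0 : E) 1)ᶜ μ := by
  have hm0 : 0 < m := lt_of_le_of_lt (Nat.cast_nonneg _) hm
  have hint : Integrable (fun x : E => (2 : ℝ) ^ m * (1 + ‖x‖) ^ (-m)) μ :=
    (integrable_one_add_norm hm).const_mul _
  have h_meas : Measurable fun y : E => ‖y‖ ^ (-m) := by fun_prop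
  refine Integrable.mono' (hint.restrict (s := (Metric.closedBall (0 : E) 1)ᶜ)) h_meas.aestronglyMeasurable.restrict ?_
  filter_upwards [ae_restrict_mem measurableSet_closedBall.compl] with y hy
  have hy1 : 1 < ‖y‖ := by
    simpa [mem_closedBall_zero_iff, not_le] using hy
  have hy0 : (0 : ℝ) < ‖y‖ := lt_trans one_pos hy1
  have h1 : (1 : ℝ) + ‖y‖ ≤ 2 * ‖y‖ := by linarith
  have h2 : (2 * ‖y‖ : ℝ) ^ (-m) ≤ (1 + ‖y‖) ^ (-m) :=
    Real.rpow_le_rpow_of_nonpos (by linarith) h1 (neg_nonpos.2 hm0.le)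
  have h3 : (2 * ‖y‖ : ℝ) ^ (-m) = 2 ^ (-m) * ‖y‖ ^ (-m) :=
    Real.mul_rpow (by norm_num) (norm_nonneg y)
  have h4 : ‖y‖ ^ (-m) = 2 ^ m * ((2 : ℝ) ^ (-m) * ‖y‖ ^ (-m)) := by
    rw [← mul_assoc, ← Real.rpow_add two_pos]
    norm_num
  rw [Real.norm_eq_abs, abs_of_nonneg (Real.rpow_nonneg (norm_nonneg y) _)]
  calc ‖y‖ ^ (-m) = 2 ^ m * ((2 : ℝ) ^ (-m) * ‖y‖ ^ (-m)) := h4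
    _ = 2 ^ m * (2 * ‖y‖ : ℝ) ^ (-m) := by rw [h3]
    _ ≤ 2 ^ m * (1 + ‖y‖) ^ (-m) :=
        mul_le_mul_of_nonneg_left h2 (Real.rpow_nonneg (by norm_num) m)


end AuxLemmas

set_option maxHeartbeats 2000000 in
theorem stmt_9 (N : ℕ) (hN : 13 ≤ N) :
    ∃ C : ℝ, 0 < C ∧
      ∀ ζ θ μ lam : ℝ, 1 / 2 ≤ μ → μ ≤ 2 → 0 < lam → lam ≤ 1 →
        (∫ x : Rn N,
            ‖fNL N (cexp ζ * (rescR μ (Wfun N) x : ℂ) + cexp θ * (rescR lam (Wfun N) x : ℂ))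
                - fNL N (cexp ζ * (rescR μ (Wfun N) x : ℂ))
                - fNL N (cexp θ * (rescR lam (Wfun N) x : ℂ))‖
              ^ ((2 * (N : ℝ)) / ((N : ℝ) + 4))) ^ (((N : ℝ) + 4) / (2 * (N : ℝ)))
          ≤ C * lam ^ (((N : ℝ) + 4) / 4) := by
  have hn : (13 : ℝ) ≤ (N : ℝ) := by exact_mod_cast hN
  have h4 : (0 : ℝ) < (N : ℝ) - 4 := by linarith
  have hNpos : (0 : ℝ) < (N : ℝ) := by linarith
  haveI : NeZero N := ⟨by omega⟩
  haveI : Nontrivial (Rn N) := by infer_instance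
  set κ : ℝ := (8 : ℝ) / ((N : ℝ) - 4) with hκdef
  have hκ0 : 0 < κ := div_pos (by norm_num) h4
  have hκ1 : κ ≤ 1 := by rw [hκdef, div_le_one h4]; linarith
  set q : ℝ := 2 * (N : ℝ) / ((N : ℝ) + 4) with hqdef
  have hq0 : 0 < q := div_pos (by linarith) (by linarith)
  set CN : ℝ := ((N : ℝ) * ((N : ℝ) - 4) * ((N : ℝ) ^ 2 - 4)) ^ (((N : ℝ) - 4) / 8) with hCNdef
  have hsq : (0 : ℝ) < (N : ℝ) ^ 2 - 4 := by nlinarith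
  have hprod : (0 : ℝ) < (N : ℝ) * ((N : ℝ) - 4) * ((N : ℝ) ^ 2 - 4) :=
    mul_pos (mul_pos hNpos h4) hsq
  have hCNpos : 0 < CN := Real.rpow_pos_of_pos hprod _
  set A0 : ℝ := 2 ^ (((N : ℝ) - 4) / 2) * CN with hA0def
  have hA0pos : 0 < A0 := mul_pos (Real.rpow_pos_of_pos two_pos _) hCNpos
  set c6 : ℝ := 5 * A0 * CN ^ κ + 5 * A0 ^ κ * CN with hc6def
  have hc6pos : 0 < c6 := by positivity
  set β : ℝ := 8 * q with hβdef
  set mm : ℝ := ((N : ℝ) - 4) * q with hmmdef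
  have hβ0 : 0 < β := by positivity
  have hfr : (Module.finrank ℝ (Rn N) : ℝ) = (N : ℝ) := by
    rw [finrank_euclideanSpace_fin]
  have hβlt : β < (Module.finrank ℝ (Rn N) : ℝ) := by
    rw [hfr, hβdef, hqdef, show 8 * (2 * (N:ℝ) / ((N:ℝ) + 4)) = 16 * (N:ℝ) / ((N:ℝ) + 4) by ring,
      div_lt_iff₀ (by linarith : (0:ℝ) < (N:ℝ) + 4)]
    nlinarith
  have hmlt : (Module.finrank ℝ (Rn N) : ℝ) < mm := by
    rw [hfr, hmmdef, hqdef, show ((N:ℝ) - 4) * (2 * (N:ℝ) / ((N:ℝ) + 4))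
        = 2 * (N:ℝ) * ((N:ℝ) - 4) / ((N:ℝ) + 4) by ring,
      lt_div_iff₀ (by linarith : (0:ℝ) < (N:ℝ) + 4)]
    nlinarith
  -- the fixed majorant
  set H : Rn N → ℝ := fun y => c6 ^ q * (if ‖y‖ ≤ 1 then ‖y‖ ^ (-β) else ‖y‖ ^ (-mm)) with hHdef
  have hHnonneg : ∀ y, 0 ≤ H y := by
    intro y
    refine mul_nonneg (Real.rpow_nonneg hc6pos.le _) ?_
    split <;> exact Real.rpow_nonneg (norm_nonneg _) _
  have hHint : Integrable H := by
    have h1 : IntegrableOn (fun y : Rn N => ‖y‖ ^ (-β)) (Metric.closedBall 0 1) volume :=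
      integrableOn_norm_rpow_closedBall volume hβ0 hβlt
    have h2 : IntegrableOn (fun y : Rn N => ‖y‖ ^ (-mm)) (Metric.closedBall 0 1)ᶜ volume :=
      integrableOn_norm_rpow_compl_closedBall volume hmlt
    have hrepr : H = fun y : Rn N => c6 ^ q *
        ((Metric.closedBall (0 : Rn N) 1).indicator (fun y => ‖y‖ ^ (-β)) y
          + ((Metric.closedBall (0 : Rn N) 1)ᶜ).indicator (fun y => ‖y‖ ^ (-mm)) y) := by
      funext y
      by_cases hy : ‖y‖ ≤ 1 <;>
        simp [hHdef, Set.indicator_apply, mem_closedBall_zero_iff, hy]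
    rw [hrepr]
    refine Integrable.const_mul ?_ _
    exact ((integrable_indicator_iff measurableSet_closedBall).2 h1).add
      ((integrable_indicator_iff measurableSet_closedBall.compl).2 h2)
  set J : ℝ := ∫ y : Rn N, H y with hJdef
  have hJ0 : 0 ≤ J := integral_nonneg hHnonneg
  refine ⟨J ^ (((N : ℝ) + 4) / (2 * (N : ℝ))) + 1, by positivity, ?_⟩
  intro ζ θ μ lam hμ1 hμ2 hlam0 hlam1
  have hμ0 : (0 : ℝ) < μ := lt_of_lt_of_le (by norm_num) hμ1
  set σ : ℝ := lam ^ ((1 : ℝ) / 2) with hσdef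
  have hσ0 : 0 < σ := Real.rpow_pos_of_pos hlam0 _
  -- basic facts about cexp and the profiles
  have hcexp : ∀ t : ℝ, ‖cexp t‖ = 1 := by
    intro t
    rw [cexp, mul_comm, Complex.norm_exp_ofReal_mul_I]
  have hWeq : ∀ y : Rn N, Wfun N y = CN * ((1 : ℝ) + ‖y‖ ^ 2) ^ (-(((N : ℝ) - 4) / 2)) := by
    intro y
    rw [Wfun, hCNdef]
  have hW0 : ∀ y : Rn N, 0 ≤ Wfun N y := by
    intro y
    rw [hWeq]
    exact mul_nonneg hCNpos.le (Real.rpow_nonneg (by positivity) _)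
  have hWle : ∀ y : Rn N, Wfun N y ≤ CN := by
    intro y
    have h1 : ((1 : ℝ) + ‖y‖ ^ 2) ^ (-(((N : ℝ) - 4) / 2)) ≤ 1 :=
      Real.rpow_le_one_of_one_le_of_nonpos (by nlinarith [sq_nonneg ‖y‖]) (by linarith)
    calc Wfun N y = CN * ((1 : ℝ) + ‖y‖ ^ 2) ^ (-(((N : ℝ) - 4) / 2)) := hWeq y
      _ ≤ CN * 1 := mul_le_mul_of_nonneg_left h1 hCNpos.le
      _ = CN := mul_one CN
  -- bound for the μ-profile
  have hwμ0 : ∀ x : Rn N, 0 ≤ rescR μ (Wfun N) x := fun x =>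
    mul_nonneg (Real.rpow_nonneg hμ0.le _) (hW0 _)
  have hwl0 : ∀ x : Rn N, 0 ≤ rescR lam (Wfun N) x := fun x =>
    mul_nonneg (Real.rpow_nonneg hlam0.le _) (hW0 _)
  have hwμle : ∀ x : Rn N, rescR μ (Wfun N) x ≤ A0 := by
    intro x
    have h1 : μ ^ (-(((N : ℝ) - 4) / 2)) ≤ 2 ^ (((N : ℝ) - 4) / 2) := by
      have h2 : μ ^ (-(((N : ℝ) - 4) / 2)) ≤ ((2 : ℝ)⁻¹) ^ (-(((N : ℝ) - 4) / 2)) := by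
        refine Real.rpow_le_rpow_of_nonpos (by norm_num) (by linarith) (by linarith)
      have h3 : ((2 : ℝ)⁻¹) ^ (-(((N : ℝ) - 4) / 2)) = 2 ^ (((N : ℝ) - 4) / 2) := by
        rw [Real.inv_rpow (by norm_num : (0:ℝ) ≤ 2), Real.rpow_neg (by norm_num : (0:ℝ) ≤ 2),
          inv_inv]
      linarith
    calc rescR μ (Wfun N) x = μ ^ (-(((N : ℝ) - 4) / 2)) * Wfun N (μ⁻¹ • x) := by
          rw [rescR]
      _ ≤ 2 ^ (((N : ℝ) - 4) / 2) * CN :=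
          mul_le_mul h1 (hWle _) (hW0 _) (Real.rpow_nonneg (by norm_num) _)
  -- decay bound for the lam profile
  have hwlle : ∀ x : Rn N, x ≠ 0 →
      rescR lam (Wfun N) x ≤ CN * (lam ^ (((N : ℝ) - 4) / 2) * ‖x‖ ^ (-((N : ℝ) - 4))) := by
    intro x hx
    have hx0 : 0 < ‖x‖ := norm_pos_iff.2 hx
    have hy0 : 0 < ‖lam⁻¹ • x‖ := by
      rw [norm_smul, Real.norm_eq_abs, abs_of_pos (inv_pos.2 hlam0)]
      positivity
    have h1 : ((1 : ℝ) + ‖lam⁻¹ • x‖ ^ 2) ^ (-(((N : ℝ) - 4) / 2))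
        ≤ (‖lam⁻¹ • x‖ ^ 2 : ℝ) ^ (-(((N : ℝ) - 4) / 2)) := by
      refine Real.rpow_le_rpow_of_nonpos (pow_pos hy0 2) (by linarith) (by linarith)
    have h2 : (‖lam⁻¹ • x‖ ^ 2 : ℝ) ^ (-(((N : ℝ) - 4) / 2))
        = ‖lam⁻¹ • x‖ ^ (-((N : ℝ) - 4)) := by
      rw [← Real.rpow_natCast ‖lam⁻¹ • x‖ 2, ← Real.rpow_mul (norm_nonneg _)]
      congr 1
      push_cast
      ring
    have h3 : ‖lam⁻¹ • x‖ = lam⁻¹ * ‖x‖ := by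
      rw [norm_smul, Real.norm_eq_abs, abs_of_pos (inv_pos.2 hlam0)]
    have h4' : (lam⁻¹ * ‖x‖ : ℝ) ^ (-((N : ℝ) - 4))
        = lam ^ ((N : ℝ) - 4) * ‖x‖ ^ (-((N : ℝ) - 4)) := by
      rw [Real.mul_rpow (inv_nonneg.2 hlam0.le) (norm_nonneg _),
        Real.inv_rpow hlam0.le, Real.rpow_neg hlam0.le, inv_inv]
    have h5 : lam ^ (-(((N : ℝ) - 4) / 2)) * lam ^ ((N : ℝ) - 4) = lam ^ (((N : ℝ) - 4) / 2) := by
      rw [← Real.rpow_add hlam0]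
      congr 1
      ring
    calc rescR lam (Wfun N) x
        = lam ^ (-(((N : ℝ) - 4) / 2)) * (CN * ((1 : ℝ) + ‖lam⁻¹ • x‖ ^ 2)
            ^ (-(((N : ℝ) - 4) / 2))) := by rw [rescR, hWeq]
      _ ≤ lam ^ (-(((N : ℝ) - 4) / 2)) * (CN * (lam ^ ((N : ℝ) - 4) * ‖x‖ ^ (-((N : ℝ) - 4)))) := by
          refine mul_le_mul_of_nonneg_left ?_ (Real.rpow_nonneg hlam0.le _)
          refine mul_le_mul_of_nonneg_left ?_ hCNpos.le
          rw [← h4', ← h3]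
          exact le_trans h1 (le_of_eq h2)
      _ = (lam ^ (-(((N : ℝ) - 4) / 2)) * lam ^ ((N : ℝ) - 4)) * (CN * ‖x‖ ^ (-((N : ℝ) - 4))) := by
          ring
      _ = CN * (lam ^ (((N : ℝ) - 4) / 2) * ‖x‖ ^ (-((N : ℝ) - 4))) := by
          rw [h5]; ring
  -- main pointwise estimate
  set G : Rn N → ℝ := fun x : Rn N =>
    ‖fNL N (cexp ζ * (rescR μ (Wfun N) x : ℂ) + cexp θ * (rescR lam (Wfun N) x : ℂ))
        - fNL N (cexp ζ * (rescR μ (Wfun N) x : ℂ))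
        - fNL N (cexp θ * (rescR lam (Wfun N) x : ℂ))‖ ^ q with hGdef
  have hptwise : ∀ x : Rn N, x ≠ 0 → G x ≤ H (σ⁻¹ • x) := by
    intro x hx
    have hx0 : 0 < ‖x‖ := norm_pos_iff.2 hx
    set az : ℂ := cexp ζ * ((rescR μ (Wfun N) x : ℝ) : ℂ) with hazdef
    set bz : ℂ := cexp θ * ((rescR lam (Wfun N) x : ℝ) : ℂ) with hbzdef
    have haz : ‖az‖ = rescR μ (Wfun N) x := by
      rw [hazdef, norm_mul, hcexp, one_mul, Complex.norm_real, Real.norm_eq_abs,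
        abs_of_nonneg (hwμ0 x)]
    have hbz : ‖bz‖ = rescR lam (Wfun N) x := by
      rw [hbzdef, norm_mul, hcexp, one_mul, Complex.norm_real, Real.norm_eq_abs,
        abs_of_nonneg (hwl0 x)]
    have hyx : ‖σ⁻¹ • x‖ = σ⁻¹ * ‖x‖ := by
      rw [norm_smul, Real.norm_eq_abs, abs_of_pos (inv_pos.2 hσ0)]
    have hy0 : 0 < ‖σ⁻¹ • x‖ := by rw [hyx]; positivity
    have hGx : G x = ‖fNL N (az + bz) - fNL N az - fNL N bz‖ ^ q := by
      rw [hGdef]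
    have hid1 : (lam ^ (((N : ℝ) - 4) / 2) * ‖x‖ ^ (-((N : ℝ) - 4))) ^ κ
        = ‖σ⁻¹ • x‖ ^ (-(8 : ℝ)) := by
      have e1 : (lam ^ (((N : ℝ) - 4) / 2) * ‖x‖ ^ (-((N : ℝ) - 4))) ^ κ
          = lam ^ (4 : ℝ) * ‖x‖ ^ (-(8 : ℝ)) := by
        rw [Real.mul_rpow (Real.rpow_nonneg hlam0.le _) (Real.rpow_nonneg (norm_nonneg _) _),
          ← Real.rpow_mul hlam0.le, ← Real.rpow_mul (norm_nonneg _)]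
        congr 1
        · congr 1
          rw [hκdef]
          field_simp
          ring
        · congr 1
          rw [hκdef]
          field_simp
      have e2 : ‖σ⁻¹ • x‖ ^ (-(8 : ℝ)) = lam ^ (4 : ℝ) * ‖x‖ ^ (-(8 : ℝ)) := by
        rw [hyx, Real.mul_rpow (inv_nonneg.2 hσ0.le) (norm_nonneg _)]
        congr 1
        rw [Real.inv_rpow hσ0.le, Real.rpow_neg hσ0.le, inv_inv, hσdef,
          ← Real.rpow_mul hlam0.le]
        norm_num
      rw [e1, e2]
    have hid2 : lam ^ (((N : ℝ) - 4) / 2) * ‖x‖ ^ (-((N : ℝ) - 4))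
        = ‖σ⁻¹ • x‖ ^ (-((N : ℝ) - 4)) := by
      rw [hyx, Real.mul_rpow (inv_nonneg.2 hσ0.le) (norm_nonneg _)]
      congr 1
      rw [Real.inv_rpow hσ0.le, Real.rpow_neg hσ0.le, inv_inv, hσdef,
        ← Real.rpow_mul hlam0.le]
      congr 1
      ring
    by_cases hcase : ‖σ⁻¹ • x‖ ≤ 1
    · -- inner region: use the decay of the lam-profile raised to power κ
      have hre : fNL N (az + bz) - fNL N az - fNL N bz
          = fNL N (bz + az) - fNL N bz - fNL N az := by
        rw [add_comm az bz]; ring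
      have hM := fNL_master N hN bz az
      have hb1 : ‖bz‖ ^ κ ≤ CN ^ κ * ‖σ⁻¹ • x‖ ^ (-(8 : ℝ)) := by
        calc ‖bz‖ ^ κ
            ≤ (CN * (lam ^ (((N : ℝ) - 4) / 2) * ‖x‖ ^ (-((N : ℝ) - 4)))) ^ κ := by
              refine Real.rpow_le_rpow (norm_nonneg _) ?_ hκ0.le
              rw [hbz]; exact hwlle x hx
          _ = CN ^ κ * (lam ^ (((N : ℝ) - 4) / 2) * ‖x‖ ^ (-((N : ℝ) - 4))) ^ κ :=
              Real.mul_rpow hCNpos.le (by positivity)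
          _ = CN ^ κ * ‖σ⁻¹ • x‖ ^ (-(8 : ℝ)) := by rw [hid1]
      have hFb : ‖fNL N (az + bz) - fNL N az - fNL N bz‖
          ≤ c6 * ‖σ⁻¹ • x‖ ^ (-(8 : ℝ)) := by
        rw [hre]
        calc ‖fNL N (bz + az) - fNL N bz - fNL N az‖
            ≤ 5 * ‖bz‖ ^ κ * ‖az‖ := by
              have := fNL_master N hN bz az
              rw [← hκdef] at this
              exact this
          _ ≤ 5 * (CN ^ κ * ‖σ⁻¹ • x‖ ^ (-(8 : ℝ))) * A0 := by
              refine mul_le_mul (mul_le_mul_of_nonneg_left hb1 (by norm_num : (0:ℝ) ≤ 5))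
                ((le_of_eq haz).trans (hwμle x)) (norm_nonneg az) (by positivity)
          _ = (5 * A0 * CN ^ κ) * ‖σ⁻¹ • x‖ ^ (-(8 : ℝ)) := by ring
          _ ≤ c6 * ‖σ⁻¹ • x‖ ^ (-(8 : ℝ)) := by
              refine mul_le_mul_of_nonneg_right ?_ (Real.rpow_nonneg hy0.le _)
              rw [hc6def]
              have : (0:ℝ) ≤ 5 * A0 ^ κ * CN := by positivity
              linarith
      rw [hGx]
      calc ‖fNL N (az + bz) - fNL N az - fNL N bz‖ ^ q
          ≤ (c6 * ‖σ⁻¹ • x‖ ^ (-(8 : ℝ))) ^ q :=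
            Real.rpow_le_rpow (norm_nonneg _) hFb hq0.le
        _ = c6 ^ q * (‖σ⁻¹ • x‖ ^ (-(8 : ℝ))) ^ q :=
            Real.mul_rpow hc6pos.le (Real.rpow_nonneg hy0.le _)
        _ = c6 ^ q * ‖σ⁻¹ • x‖ ^ (-β) := by
            rw [← Real.rpow_mul (norm_nonneg _)]
            congr 1
            rw [hβdef]; ring
        _ = H (σ⁻¹ • x) := by
            rw [hHdef]
            simp only
            rw [if_pos hcase]
    · -- outer region
      have hM : ‖fNL N (az + bz) - fNL N az - fNL N bz‖ ≤ 5 * ‖az‖ ^ κ * ‖bz‖ := by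
        have := fNL_master N hN az bz
        rw [← hκdef] at this
        exact this
      have ha1 : ‖az‖ ^ κ ≤ A0 ^ κ :=
        Real.rpow_le_rpow (norm_nonneg _) ((le_of_eq haz).trans (hwμle x)) hκ0.le
      have hb2 : ‖bz‖ ≤ CN * ‖σ⁻¹ • x‖ ^ (-((N : ℝ) - 4)) := by
        calc ‖bz‖ = rescR lam (Wfun N) x := hbz
          _ ≤ CN * (lam ^ (((N : ℝ) - 4) / 2) * ‖x‖ ^ (-((N : ℝ) - 4))) := hwlle x hx
          _ = CN * ‖σ⁻¹ • x‖ ^ (-((N : ℝ) - 4)) := by rw [hid2]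
      have hFb : ‖fNL N (az + bz) - fNL N az - fNL N bz‖
          ≤ c6 * ‖σ⁻¹ • x‖ ^ (-((N : ℝ) - 4)) := by
        calc ‖fNL N (az + bz) - fNL N az - fNL N bz‖
            ≤ 5 * ‖az‖ ^ κ * ‖bz‖ := hM
          _ ≤ 5 * A0 ^ κ * (CN * ‖σ⁻¹ • x‖ ^ (-((N : ℝ) - 4))) := by
              refine mul_le_mul (mul_le_mul_of_nonneg_left ha1 (by norm_num : (0:ℝ) ≤ 5))
                hb2 (norm_nonneg bz) (by positivity)
          _ = (5 * A0 ^ κ * CN) * ‖σ⁻¹ • x‖ ^ (-((N : ℝ) - 4)) := by ring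
          _ ≤ c6 * ‖σ⁻¹ • x‖ ^ (-((N : ℝ) - 4)) := by
              refine mul_le_mul_of_nonneg_right ?_ (Real.rpow_nonneg hy0.le _)
              rw [hc6def]
              have : (0:ℝ) ≤ 5 * A0 * CN ^ κ := by positivity
              linarith
      rw [hGx]
      calc ‖fNL N (az + bz) - fNL N az - fNL N bz‖ ^ q
          ≤ (c6 * ‖σ⁻¹ • x‖ ^ (-((N : ℝ) - 4))) ^ q :=
            Real.rpow_le_rpow (norm_nonneg _) hFb hq0.le
        _ = c6 ^ q * (‖σ⁻¹ • x‖ ^ (-((N : ℝ) - 4))) ^ q :=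
            Real.mul_rpow hc6pos.le (Real.rpow_nonneg hy0.le _)
        _ = c6 ^ q * ‖σ⁻¹ • x‖ ^ (-mm) := by
            rw [← Real.rpow_mul (norm_nonneg _)]
            congr 1
            rw [hmmdef]; ring
        _ = H (σ⁻¹ • x) := by
            rw [hHdef]
            simp only
            rw [if_neg hcase]
  have hae : ∀ᵐ x : Rn N, G x ≤ H (σ⁻¹ • x) := by
    filter_upwards [compl_mem_ae_iff.2 (measure_singleton (0 : Rn N))] with x hx
    exact hptwise x hx
  have hg0 : (0 : Rn N → ℝ) ≤ᵐ[volume] G :=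
    Eventually.of_forall fun x => Real.rpow_nonneg (norm_nonneg _) _
  have hHσint : Integrable (fun x : Rn N => H (σ⁻¹ • x)) :=
    hHint.comp_smul (inv_ne_zero hσ0.ne')
  have hmono : (∫ x : Rn N, G x) ≤ ∫ x : Rn N, H (σ⁻¹ • x) :=
    integral_mono_of_nonneg hg0 hHσint hae
  have hcv : (∫ x : Rn N, H (σ⁻¹ • x)) = lam ^ ((N : ℝ) / 2) * J := by
    rw [MeasureTheory.Measure.integral_comp_smul volume H σ⁻¹]
    rw [show Module.finrank ℝ (Rn N) = N from finrank_euclideanSpace_fin]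
    rw [inv_pow, inv_inv, abs_of_pos (pow_pos hσ0 N), smul_eq_mul]
    congr 1
    rw [hσdef, ← Real.rpow_natCast (lam ^ ((1 : ℝ) / 2)) N, ← Real.rpow_mul hlam0.le]
    congr 1
    ring
  have hIg0 : 0 ≤ ∫ x : Rn N, G x :=
    integral_nonneg fun x => Real.rpow_nonneg (norm_nonneg _) _
  calc (∫ x : Rn N, G x) ^ (((N : ℝ) + 4) / (2 * (N : ℝ)))
      ≤ (lam ^ ((N : ℝ) / 2) * J) ^ (((N : ℝ) + 4) / (2 * (N : ℝ))) :=
        Real.rpow_le_rpow hIg0 (hmono.trans (le_of_eq hcv)) (by positivity)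
    _ = (lam ^ ((N : ℝ) / 2)) ^ (((N : ℝ) + 4) / (2 * (N : ℝ)))
          * J ^ (((N : ℝ) + 4) / (2 * (N : ℝ))) :=
        Real.mul_rpow (Real.rpow_nonneg hlam0.le _) hJ0
    _ = lam ^ (((N : ℝ) + 4) / 4) * J ^ (((N : ℝ) + 4) / (2 * (N : ℝ))) := by
        rw [← Real.rpow_mul hlam0.le]
        congr 2
        field_simp
        ring
    _ ≤ (J ^ (((N : ℝ) + 4) / (2 * (N : ℝ))) + 1) * lam ^ (((N : ℝ) + 4) / 4) := by
        nlinarith [Real.rpow_nonneg hlam0.le (((N : ℝ) + 4) / 4),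
          Real.rpow_nonneg hJ0 (((N : ℝ) + 4) / (2 * (N : ℝ)))]
end
end
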